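/- arXiv:1310.4127 — 8 statements merged into one kernel-verified Lean document; each statement's English description precedes it below -/
import Mathlib

section
/- If X is a hypergeometric random variable with parameters (n, m, r) (i.e., X counts the number of marked elements when r elements are drawn without replacement from a population of size n containing m marked elements) with expectation μ = rm/n, then for any 0 < δ ≤ 1, Pr[X ≥ (1+δ)μ] ≤ exp(−μδ²/3). -/
open Real

lemma exp_pade {t : ℝ} (ht0 : 0 ≤ t) (ht1 : t ≤ 1) : Real.exp t * (2 - t) ≤ 2 + t := by
  have key : MonotoneOn (fun t : ℝ => 2 + t - (2 - t) * Real.exp t) (Set.Icc 0 1) := by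
    apply monotoneOn_of_deriv_nonneg (convex_Icc 0 1)
    · fun_prop
    · intro x hx
      exact (((hasDerivAt_id x).const_add 2).sub
        (((hasDerivAt_id x).const_sub 2).mul (Real.hasDerivAt_exp x))).differentiableAt.differentiableWithinAt
    · intro x hx
      have hd : HasDerivAt (fun t : ℝ => 2 + t - (2 - t) * Real.exp t)
          (1 - ((-1) * Real.exp x + (2 - x) * Real.exp x)) x :=
        (((hasDerivAt_id x).const_add 2).sub
          (((hasDerivAt_id x).const_sub 2).mul (Real.hasDerivAt_exp x)))
      rw [hd.deriv]
      have h1 : (1 - x) * Real.exp x ≤ 1 := by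
        have h := Real.add_one_le_exp (-x)
        rw [Real.exp_neg] at h
        have hex := Real.exp_pos x
        have := mul_le_mul_of_nonneg_right h hex.le
        rw [inv_mul_cancel₀ hex.ne'] at this
        nlinarith
      nlinarith
  have h0 : (0:ℝ) ∈ Set.Icc (0:ℝ) 1 := by norm_num
  have ht : t ∈ Set.Icc (0:ℝ) 1 := ⟨ht0, ht1⟩
  have := key h0 ht ht0
  simp at this
  nlinarith

lemma log_lb {δ : ℝ} (h0 : 0 ≤ δ) (h1 : δ ≤ 1) : 2 * δ / (2 + δ) ≤ Real.log (1 + δ) := by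
  have hpos : (0:ℝ) < 2 + δ := by linarith
  rw [Real.le_log_iff_exp_le (by linarith)]
  set t := 2 * δ / (2 + δ) with htdef
  have ht0 : 0 ≤ t := by positivity
  have ht1 : t ≤ 1 := by rw [div_le_one hpos]; linarith
  have hp := exp_pade ht0 ht1
  have h2t : 2 - t = 4 / (2 + δ) := by
    rw [eq_div_iff hpos.ne', htdef, sub_mul, div_mul_cancel₀ _ hpos.ne']; ring
  have h2t' : 2 + t = (4 + 4 * δ) / (2 + δ) := by
    rw [eq_div_iff hpos.ne', htdef, add_mul, div_mul_cancel₀ _ hpos.ne']; ring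
  rw [h2t, h2t'] at hp
  have h4 : (0:ℝ) < 4 / (2 + δ) := by positivity
  rw [← le_div_iff₀ h4] at hp
  calc Real.exp t ≤ ((4 + 4*δ) / (2+δ)) / (4 / (2+δ)) := hp
    _ = 1 + δ := by field_simp

lemma chernoff_exponent {δ : ℝ} (h0 : 0 < δ) (h1 : δ ≤ 1) :
    δ - (1 + δ) * Real.log (1 + δ) ≤ -(δ ^ 2) / 3 := by
  have hl := log_lb h0.le h1
  have hpos : (0:ℝ) < 2 + δ := by linarith
  have : (1 + δ) * (2 * δ / (2 + δ)) ≤ (1 + δ) * Real.log (1 + δ) :=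
    mul_le_mul_of_nonneg_left hl (by linarith)
  have he : (1 + δ) * (2 * δ / (2 + δ)) = δ + δ^2 / (2 + δ) := by field_simp; ring
  have h3 : δ^2 / 3 ≤ δ^2 / (2 + δ) := by
    apply div_le_div_of_nonneg_left (by positivity) hpos (by linarith)
  linarith [he ▸ this]

-- range-form Vandermonde
lemma vander (a b k : ℕ) :
    ∑ j ∈ Finset.range (k+1), a.choose j * b.choose (k-j) = (a+b).choose k := by
  rw [Nat.add_choose_eq, Finset.Nat.sum_antidiagonal_eq_sum_range_succ_mk]

-- (i+1) * C(m,i+1) = m * C(m-1,i)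
lemma choose_mul_shift (m i : ℕ) : (i+1) * m.choose (i+1) = m * (m-1).choose i := by
  cases m with
  | zero => simp
  | succ m' =>
    have := Nat.add_one_mul_choose_eq m' i
    simp only [Nat.succ_sub_one]
    linarith

-- mean identity: ∑ j * C(m,j) * C(b,k-j) = m * C(m-1+b, k-1), k ≥ 1
lemma mean_id (m b k : ℕ) (hk : 1 ≤ k) :
    ∑ j ∈ Finset.range (k+1), j * (m.choose j * b.choose (k-j))
      = m * (m-1+b).choose (k-1) := by
  rw [Finset.sum_range_succ']
  simp only [Nat.zero_eq, Nat.choose_zero_right, mul_zero, zero_mul, add_zero]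
  have step : ∀ i, (i+1) * (m.choose (i+1) * b.choose (k-(i+1)))
      = m * ((m-1).choose i * b.choose ((k-1)-i)) := by
    intro i
    have h1 : k - (i+1) = (k-1) - i := by omega
    rw [h1, ← mul_assoc, choose_mul_shift, mul_assoc]
  calc ∑ i ∈ Finset.range k, (i+1) * (m.choose (i+1) * b.choose (k-(i+1)))
      = ∑ i ∈ Finset.range k, m * ((m-1).choose i * b.choose ((k-1)-i)) :=
        Finset.sum_congr rfl (fun i _ => step i)
    _ = m * ∑ i ∈ Finset.range ((k-1)+1), (m-1).choose i * b.choose ((k-1)-i) := by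
        have hkk : (k-1)+1 = k := by omega
        rw [← Finset.mul_sum, hkk]
    _ = m * (m-1+b).choose (k-1) := by rw [vander]

lemma cheb (s : Finset ℕ) (w f g : ℕ → ℝ) (hw : ∀ i ∈ s, 0 ≤ w i)
    (hfg : ∀ i ∈ s, ∀ j ∈ s, i ≤ j → f i ≤ f j ∧ g j ≤ g i) :
    (∑ i ∈ s, w i) * (∑ i ∈ s, w i * f i * g i) ≤
      (∑ i ∈ s, w i * f i) * (∑ i ∈ s, w i * g i) := by
  have key : ∑ i ∈ s, ∑ j ∈ s, w i * w j * ((f i - f j) * (g i - g j)) ≤ 0 := by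
    apply Finset.sum_nonpos
    intro i hi
    apply Finset.sum_nonpos
    intro j hj
    have hwij : 0 ≤ w i * w j := mul_nonneg (hw i hi) (hw j hj)
    rcases le_total i j with h | h
    · obtain ⟨h1, h2⟩ := hfg i hi j hj h
      have : (f i - f j) * (g i - g j) ≤ 0 :=
        mul_nonpos_of_nonpos_of_nonneg (by linarith) (by linarith)
      exact mul_nonpos_of_nonneg_of_nonpos hwij this
    · obtain ⟨h1, h2⟩ := hfg j hj i hi h
      have : (f i - f j) * (g i - g j) ≤ 0 :=
        mul_nonpos_of_nonneg_of_nonpos (by linarith) (by linarith)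
      exact mul_nonpos_of_nonneg_of_nonpos hwij this
  have expand : ∑ i ∈ s, ∑ j ∈ s, w i * w j * ((f i - f j) * (g i - g j))
      = 2 * ((∑ i ∈ s, w i) * (∑ i ∈ s, w i * f i * g i))
        - 2 * ((∑ i ∈ s, w i * f i) * (∑ i ∈ s, w i * g i)) := by
    have A := Finset.sum_mul_sum s s (fun i => w i) (fun j => w j * f j * g j)
    have B := Finset.sum_mul_sum s s (fun i => w i * f i) (fun j => w j * g j)
    have C := Finset.sum_mul_sum s s (fun i => w i * g i) (fun j => w j * f j)
    have D := Finset.sum_mul_sum s s (fun i => w i * f i * g i) (fun j => w j)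
    calc ∑ i ∈ s, ∑ j ∈ s, w i * w j * ((f i - f j) * (g i - g j))
        = ∑ i ∈ s, ∑ j ∈ s, (w i * (w j * f j * g j) + (w i * f i * g i) * w j
            - ((w i * f i) * (w j * g j) + (w i * g i) * (w j * f j))) := by
          apply Finset.sum_congr rfl; intro i _; apply Finset.sum_congr rfl; intro j _; ring
      _ = (∑ i ∈ s, ∑ j ∈ s, w i * (w j * f j * g j))
            + (∑ i ∈ s, ∑ j ∈ s, (w i * f i * g i) * w j)
            - ((∑ i ∈ s, ∑ j ∈ s, (w i * f i) * (w j * g j))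
            + (∑ i ∈ s, ∑ j ∈ s, (w i * g i) * (w j * f j))) := by
          simp [Finset.sum_add_distrib, Finset.sum_sub_distrib]
      _ = _ := by rw [← A, ← B, ← C, ← D]; ring
  linarith [key, expand ▸ key]

lemma S_le (n m : ℕ) (hm : m ≤ n) (hn : 0 < n) (z : ℝ) (hz : 1 ≤ z) :
    ∀ r, r ≤ n →
      (∑ j ∈ Finset.range (r+1), (m.choose j : ℝ) * ((n-m).choose (r-j) : ℝ) * z^j)
        ≤ (n.choose r : ℝ) * (1 + (z-1)*(m:ℝ)/n)^r := by
  have hn' : (0:ℝ) < n := by exact_mod_cast hn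
  set q : ℝ := 1 + (z-1)*(m:ℝ)/n with hq
  have hq1 : 1 ≤ q := by
    have h0 : 0 ≤ (z-1)*(m:ℝ)/n :=
      div_nonneg (mul_nonneg (by linarith) (Nat.cast_nonneg m)) hn'.le
    rw [hq]; linarith
  intro r
  induction r with
  | zero => intro _; simp
  | succ r ih =>
    intro hrn
    have hrn' : r ≤ n := by omega
    rcases Nat.eq_zero_or_pos r with hr0 | hr1
    · -- r+1 = 1 case
      subst hr0
      norm_num [Finset.sum_range_succ, Nat.choose_one_right]
      rw [Nat.cast_sub hm, hq]
      apply le_of_eq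
      field_simp
      ring
    · -- main step
      set W : ℕ → ℝ := fun j => (m.choose j : ℝ) * ((n-m).choose (r-j) : ℝ) with hW
      set f : ℕ → ℝ := fun j => z^j with hf
      set g : ℕ → ℝ := fun j => ((n:ℝ) - r) + (z-1)*((m:ℝ) - j) with hg
      -- step identity
      have key : ((r:ℝ)+1) *
          (∑ j ∈ Finset.range (r+1+1), (m.choose j : ℝ) * ((n-m).choose (r+1-j) : ℝ) * z^j)
          = ∑ j ∈ Finset.range (r+1), W j * f j * g j := by
        rw [Finset.mul_sum]
        have split : ∀ j ∈ Finset.range (r+1+1),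
            ((r:ℝ)+1) * ((m.choose j : ℝ) * ((n-m).choose (r+1-j) : ℝ) * z^j)
            = (m.choose j : ℝ) * (((n-m).choose (r+1-j) : ℝ) * ((r+1-j : ℕ):ℝ)) * z^j
              + (m.choose j : ℝ) * ((j:ℕ):ℝ) * ((n-m).choose (r+1-j) : ℝ) * z^j := by
          intro j hj
          rw [Finset.mem_range] at hj
          have h0 : (r+1-j) + j = r+1 := by omega
          have hc : ((r+1-j : ℕ):ℝ) + (j:ℝ) = (r:ℝ)+1 := by
            rw [← Nat.cast_add, h0]; push_cast; ring
          rw [← hc]; ring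
        rw [Finset.sum_congr rfl split, Finset.sum_add_distrib]
        -- A part
        have hA : (∑ j ∈ Finset.range (r+1+1),
              (m.choose j : ℝ) * (((n-m).choose (r+1-j) : ℝ) * ((r+1-j : ℕ):ℝ)) * z^j)
            = ∑ j ∈ Finset.range (r+1),
              (m.choose j : ℝ) * ((((n-m).choose (r-j)) * (n-m-(r-j)) : ℕ):ℝ) * z^j := by
          rw [Finset.sum_range_succ]
          simp only [Nat.sub_self, Nat.cast_zero, mul_zero, zero_mul, add_zero]
          apply Finset.sum_congr rfl
          intro j hj
          rw [Finset.mem_range] at hj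
          have hid : (n-m).choose (r+1-j) * (r+1-j) = (n-m).choose (r-j) * (n-m-(r-j)) := by
            have h1 : r+1-j = (r-j)+1 := by omega
            rw [h1]
            exact Nat.choose_succ_right_eq (n-m) (r-j)
          push_cast [← hid]
          ring
        -- B part
        have hB : (∑ j ∈ Finset.range (r+1+1),
              (m.choose j : ℝ) * ((j:ℕ):ℝ) * ((n-m).choose (r+1-j) : ℝ) * z^j)
            = ∑ j ∈ Finset.range (r+1),
              (((m.choose j) * (m-j) : ℕ):ℝ) * ((n-m).choose (r-j) : ℝ) * z^(j+1) := by
          rw [Finset.sum_range_succ']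
          simp only [Nat.cast_zero, mul_zero, zero_mul, add_zero]
          apply Finset.sum_congr rfl
          intro i hi
          have hid : m.choose (i+1) * (i+1) = m.choose i * (m-i) := Nat.choose_succ_right_eq m i
          have h2 : r+1-(i+1) = r-i := by omega
          rw [h2]
          push_cast [← hid]
          ring
        rw [hA, hB]
        rw [← Finset.sum_add_distrib]
        apply Finset.sum_congr rfl
        intro j hj
        rw [Finset.mem_range] at hj
        by_cases h1 : m < j
        · have e1 : m.choose j = 0 := Nat.choose_eq_zero_of_lt h1
          simp [hW, hf, hg, e1]
        by_cases h2 : n - m < r - j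
        · have e2 : (n-m).choose (r-j) = 0 := Nat.choose_eq_zero_of_lt h2
          simp [hW, hf, hg, e2]
        push_neg at h1 h2
        have c1 : ((m - j : ℕ):ℝ) = (m:ℝ) - j := by
          rw [Nat.cast_sub h1]
        have c2 : ((n-m-(r-j) : ℕ):ℝ) = (n:ℝ) - m - ((r:ℝ) - j) := by
          rw [Nat.cast_sub h2, Nat.cast_sub hm, Nat.cast_sub (by omega : j ≤ r)]
        simp only [hW, hf, hg]
        push_cast [c1, c2]
        ring
      have hwpos : ∀ i ∈ Finset.range (r+1), 0 ≤ W i := by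
        intro i _; simp only [hW]; positivity
      have hfg : ∀ i ∈ Finset.range (r+1), ∀ j ∈ Finset.range (r+1), i ≤ j →
          f i ≤ f j ∧ g j ≤ g i := by
        intro i _ j _ hij
        have hij' : (i:ℝ) ≤ j := by exact_mod_cast hij
        constructor
        · simp only [hf]; exact pow_le_pow_right₀ (by linarith) hij
        · simp only [hg]; nlinarith
      have hch := cheb (Finset.range (r+1)) W f g hwpos hfg
      have hWsum : ∑ i ∈ Finset.range (r+1), W i = (n.choose r : ℝ) := by
        have hv := vander m (n-m) r
        have hmn : m + (n-m) = n := by omega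
        rw [hmn] at hv
        simp only [hW]
        exact_mod_cast congrArg (fun k : ℕ => (k:ℝ)) hv
      have hjWsum : ∑ i ∈ Finset.range (r+1), (i:ℝ) * W i
          = (m:ℝ) * ((n-1).choose (r-1) : ℝ) := by
        have h1 := mean_id m (n-m) r hr1
        have h2 : m * ((m-1+(n-m)).choose (r-1)) = m * ((n-1).choose (r-1)) := by
          rcases Nat.eq_zero_or_pos m with h|h
          · simp [h]
          · congr 2; omega
        rw [h2] at h1
        simp only [hW]
        exact_mod_cast congrArg (fun k : ℕ => (k:ℝ)) h1
      have hcn1 : (n:ℝ) * ((n-1).choose (r-1) : ℝ) = (r:ℝ) * (n.choose r : ℝ) := by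
        have h := Nat.add_one_mul_choose_eq (n-1) (r-1)
        have h1 : (n-1)+1 = n := by omega
        have h2 : (r-1)+1 = r := by omega
        rw [h1, h2] at h
        have hc := congrArg (fun k : ℕ => (k:ℝ)) h
        push_cast at hc
        linarith
      have hWsumg : ∑ i ∈ Finset.range (r+1), W i * g i
          = ((n:ℝ) - r) * (n.choose r : ℝ) * q := by
        have e : ∑ i ∈ Finset.range (r+1), W i * g i
            = ((n:ℝ)-r+(z-1)*m) * (∑ i ∈ Finset.range (r+1), W i)
              - (z-1) * (∑ i ∈ Finset.range (r+1), (i:ℝ) * W i) := by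
          rw [Finset.mul_sum, Finset.mul_sum, ← Finset.sum_sub_distrib]
          apply Finset.sum_congr rfl
          intro i _
          simp only [hg]; ring
        have e2 : ((n-1).choose (r-1):ℝ) = (r:ℝ) * (n.choose r:ℝ) / n := by
          field_simp; linarith
        rw [e, hWsum, hjWsum, e2, hq]
        field_simp
        ring
      have hfsum : ∑ i ∈ Finset.range (r+1), W i * f i
          = ∑ j ∈ Finset.range (r+1), (m.choose j : ℝ) * ((n-m).choose (r-j) : ℝ) * z^j := by
        apply Finset.sum_congr rfl; intro i _; simp only [hW, hf]
      rw [hWsum, hfsum, hWsumg] at hch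
      have hSr := ih hrn'
      have hCpos : (0:ℝ) < (n.choose r : ℝ) := by exact_mod_cast Nat.choose_pos hrn'
      have hnr0 : (0:ℝ) ≤ (n:ℝ) - r := by
        have : (r:ℝ) ≤ n := by exact_mod_cast hrn'
        linarith
      have hq0 : (0:ℝ) < q := by linarith
      have step2 : (∑ j ∈ Finset.range (r+1), (m.choose j:ℝ)*((n-m).choose (r-j):ℝ)*z^j)
            * (((n:ℝ)-r)*(n.choose r:ℝ)*q)
          ≤ ((n.choose r:ℝ) * q^r) * (((n:ℝ)-r)*(n.choose r:ℝ)*q) := by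
        apply mul_le_mul_of_nonneg_right hSr
        positivity
      have hlast : ((n:ℝ)-r) * (n.choose r:ℝ) = ((r:ℝ)+1) * (n.choose (r+1):ℝ) := by
        have h := Nat.choose_succ_right_eq n r
        have hc := congrArg (fun k : ℕ => (k:ℝ)) h
        push_cast [Nat.cast_sub hrn'] at hc
        linarith
      rw [← key] at hch
      have h6 : (n.choose r:ℝ) * (((r:ℝ)+1) *
            (∑ j ∈ Finset.range (r+1+1), (m.choose j : ℝ) * ((n-m).choose (r+1-j) : ℝ) * z^j))
          ≤ (n.choose r:ℝ) * (((n:ℝ)-r) * (n.choose r:ℝ) * q^(r+1)) := by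
        calc (n.choose r:ℝ) * (((r:ℝ)+1) *
              (∑ j ∈ Finset.range (r+1+1), (m.choose j : ℝ) * ((n-m).choose (r+1-j) : ℝ) * z^j))
            ≤ ((n.choose r:ℝ) * q^r) * (((n:ℝ)-r)*(n.choose r:ℝ)*q) := by
              calc _ = (n.choose r:ℝ) * (((r:ℝ)+1) * _) := rfl
                _ ≤ _ := hch.trans step2
          _ = (n.choose r:ℝ) * (((n:ℝ)-r) * (n.choose r:ℝ) * q^(r+1)) := by ring
      have h7 := (mul_le_mul_iff_of_pos_left hCpos).mp h6
      rw [hlast, mul_assoc] at h7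
      have hr1' : (0:ℝ) < (r:ℝ)+1 := by positivity
      exact (mul_le_mul_iff_of_pos_left hr1').mp h7

/-- Hypergeometric tail bound (upper, Chernoff-type): for `X ~ HG(n,m,r)` with
expectation `μ = r*m/n`, and any `0 < δ ≤ 1`, `Pr[X ≥ (1+δ)μ] ≤ exp(-μδ²/3)`. -/
theorem stmt_0 (n m r : ℕ) (hm : m ≤ n) (hr : r ≤ n) (hn : 0 < n)
    (δ : ℝ) (hδ0 : 0 < δ) (hδ1 : δ ≤ 1) :
    (∑ j ∈ Finset.range (r + 1),
        if (1 + δ) * ((r : ℝ) * m / n) ≤ (j : ℝ) then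
          ((m.choose j : ℝ) * ((n - m).choose (r - j) : ℝ) / (n.choose r : ℝ))
        else 0)
      ≤ Real.exp (-(((r : ℝ) * m / n) * δ ^ 2) / 3) := by
  have hn' : (0:ℝ) < n := by exact_mod_cast hn
  set μ : ℝ := (r : ℝ) * m / n with hμ
  have hμ0 : 0 ≤ μ := by positivity
  set z : ℝ := 1 + δ with hzdef
  have hz1 : (1:ℝ) ≤ z := by rw [hzdef]; linarith
  have hz0 : (0:ℝ) < z := by linarith
  set a : ℝ := (1 + δ) * μ with hadef
  have ha0 : 0 ≤ a := by positivity
  have hCpos : (0:ℝ) < (n.choose r : ℝ) := by exact_mod_cast Nat.choose_pos hr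
  -- Step 1: pointwise bound by exponential tilt
  have step1 : (∑ j ∈ Finset.range (r + 1),
        if a ≤ (j : ℝ) then
          ((m.choose j : ℝ) * ((n - m).choose (r - j) : ℝ) / (n.choose r : ℝ))
        else 0)
      ≤ ∑ j ∈ Finset.range (r + 1),
          ((m.choose j : ℝ) * ((n - m).choose (r - j) : ℝ) * z ^ j)
            * (z ^ (-a) / (n.choose r : ℝ)) := by
    apply Finset.sum_le_sum
    intro j _
    by_cases hj : a ≤ (j : ℝ)
    · rw [if_pos hj]
      have h1 : (1:ℝ) ≤ z ^ ((j:ℝ) - a) := Real.one_le_rpow hz1 (by linarith)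
      have h2 : z ^ ((j:ℝ) - a) = z ^ j * z ^ (-a) := by
        rw [sub_eq_add_neg, Real.rpow_add hz0, Real.rpow_natCast]
      have h3 : (1:ℝ) ≤ z ^ j * z ^ (-a) := h2 ▸ h1
      have hw : 0 ≤ (m.choose j : ℝ) * ((n - m).choose (r - j) : ℝ) / (n.choose r : ℝ) := by
        positivity
      calc (m.choose j : ℝ) * ((n - m).choose (r - j) : ℝ) / (n.choose r : ℝ)
          = ((m.choose j : ℝ) * ((n - m).choose (r - j) : ℝ) / (n.choose r : ℝ)) * 1 := by ring
        _ ≤ ((m.choose j : ℝ) * ((n - m).choose (r - j) : ℝ) / (n.choose r : ℝ))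
              * (z ^ j * z ^ (-a)) := by
            exact mul_le_mul_of_nonneg_left h3 hw
        _ = ((m.choose j : ℝ) * ((n - m).choose (r - j) : ℝ) * z ^ j)
              * (z ^ (-a) / (n.choose r : ℝ)) := by ring
    · rw [if_neg hj]
      have : (0:ℝ) ≤ z ^ (-a) := Real.rpow_nonneg hz0.le _
      positivity
  -- Step 2: sum bound via S_le
  have hS := S_le n m hm hn z hz1 r hr
  have hfac : (0:ℝ) ≤ z ^ (-a) / (n.choose r : ℝ) :=
    div_nonneg (Real.rpow_nonneg hz0.le _) hCpos.le
  have step2 : (∑ j ∈ Finset.range (r + 1),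
        ((m.choose j : ℝ) * ((n - m).choose (r - j) : ℝ) * z ^ j))
          * (z ^ (-a) / (n.choose r : ℝ))
      ≤ ((n.choose r : ℝ) * (1 + (z-1)*(m:ℝ)/n)^r) * (z ^ (-a) / (n.choose r : ℝ)) :=
    mul_le_mul_of_nonneg_right hS hfac
  rw [← Finset.sum_mul] at step1
  set q : ℝ := 1 + (z-1)*(m:ℝ)/n with hqdef
  have hq0 : (0:ℝ) ≤ q := by
    have : 0 ≤ (z-1)*(m:ℝ)/n := by
      apply div_nonneg (mul_nonneg (by linarith) (Nat.cast_nonneg m)) hn'.le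
    rw [hqdef]; linarith
  have step3 : ((n.choose r : ℝ) * q^r) * (z ^ (-a) / (n.choose r : ℝ))
      = q^r * z ^ (-a) := by field_simp
  -- Step 3: exponential bounds
  have hqexp : q ≤ Real.exp (δ * m / n) := by
    have := Real.add_one_le_exp (δ * (m:ℝ) / n)
    rw [hqdef, hzdef]
    have he : (1 + δ - 1) * (m:ℝ)/n = δ * (m:ℝ)/n := by ring
    rw [he]
    linarith
  have hqr : q^r ≤ Real.exp (δ * m / n) ^ r := pow_le_pow_left₀ hq0 hqexp r
  have hqr2 : Real.exp (δ * m / n) ^ r = Real.exp ((r:ℝ) * (δ * m / n)) := by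
    rw [← Real.exp_nat_mul]
  have hza : z ^ (-a) = Real.exp (Real.log z * (-a)) := Real.rpow_def_of_pos hz0 _
  have final1 : q^r * z ^ (-a) ≤ Real.exp ((r:ℝ) * (δ * m / n) + Real.log z * (-a)) := by
    rw [Real.exp_add, ← hqr2, hza]
    exact mul_le_mul_of_nonneg_right (hqr) (by positivity)
  -- Step 4: the exponent inequality
  have hexp : (r:ℝ) * (δ * m / n) + Real.log z * (-a) ≤ -(μ * δ ^ 2) / 3 := by
    have h1 : (r:ℝ) * (δ * m / n) = μ * δ := by rw [hμ]; ring
    have h2 : Real.log z * (-a) = -(μ * ((1+δ) * Real.log (1+δ))) := by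
      rw [hadef, hzdef]; ring
    rw [h1, h2]
    have h3 := chernoff_exponent hδ0 hδ1
    have h4 : μ * (δ - (1+δ) * Real.log (1+δ)) ≤ μ * (-(δ^2)/3) :=
      mul_le_mul_of_nonneg_left h3 hμ0
    nlinarith [h4]
  calc (∑ j ∈ Finset.range (r + 1),
        if (1 + δ) * ((r : ℝ) * m / n) ≤ (j : ℝ) then
          ((m.choose j : ℝ) * ((n - m).choose (r - j) : ℝ) / (n.choose r : ℝ))
        else 0)
      ≤ _ := step1
    _ ≤ ((n.choose r : ℝ) * q^r) * (z ^ (-a) / (n.choose r : ℝ)) := step2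
    _ = q^r * z ^ (-a) := step3
    _ ≤ Real.exp ((r:ℝ) * (δ * m / n) + Real.log z * (-a)) := final1
    _ ≤ Real.exp (-(μ * δ ^ 2) / 3) := Real.exp_le_exp.mpr hexp
end

section
/- If X is a hypergeometric random variable with parameters (n, m, r) with expectation μ = rm/n, then for any 0 < δ < 1, Pr[X ≤ (1−δ)μ] ≤ exp(−μδ²/2). -/
open Finset

-- Vandermonde, nat
lemma vand (n m s : ℕ) (hm : m ≤ n) :
    ∑ j ∈ range (s+1), m.choose j * (n-m).choose (s-j) = n.choose s := by
  have h := Nat.add_choose_eq m (n-m) s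
  rw [Nat.add_sub_cancel' hm] at h
  rw [h, Finset.Nat.sum_antidiagonal_eq_sum_range_succ_mk]

-- mean identity, nat
lemma meanid (n m s : ℕ) (hm : m ≤ n) :
    ∑ j ∈ range (s+1), j * (m.choose j * (n-m).choose (s-j)) * n
      = s * m * n.choose s := by
  rcases Nat.eq_zero_or_pos m with hm0 | hm0
  · subst hm0
    simp [Nat.choose_eq_zero_of_lt, Nat.sub_zero]
    intro j hj
    cases j with
    | zero => simp
    | succ i => simp
  rcases Nat.eq_zero_or_pos s with hs0 | hs0
  · subst hs0; simp
  obtain ⟨m', rfl⟩ : ∃ m', m = m' + 1 := ⟨m - 1, (Nat.succ_pred_eq_of_pos hm0).symm⟩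
  obtain ⟨s', rfl⟩ : ∃ s', s = s' + 1 := ⟨s - 1, (Nat.succ_pred_eq_of_pos hs0).symm⟩
  obtain ⟨n', rfl⟩ : ∃ n', n = n' + 1 := ⟨n - 1, (Nat.succ_pred_eq_of_pos (lt_of_lt_of_le hm0 hm)).symm⟩
  have hm' : m' ≤ n' := Nat.succ_le_succ_iff.mp hm
  rw [Finset.sum_range_succ']
  simp only [Nat.zero_mul, Nat.mul_zero, Nat.add_zero, Nat.zero_mul, zero_mul, add_zero]
  have hsub : n' + 1 - (m' + 1) = n' - m' := by omega
  have step : ∀ i, (i+1) * ((m'+1).choose (i+1) * (n'+1-(m'+1)).choose (s'+1-(i+1))) * (n'+1)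
      = ((m'+1) * (m'.choose i * (n'-m').choose (s'-i))) * (n'+1) := by
    intro i
    rw [hsub]
    have h1 : (m'+1) * m'.choose i = (m'+1).choose (i+1) * (i+1) := Nat.add_one_mul_choose_eq m' i
    have : s' + 1 - (i+1) = s' - i := by omega
    have h1' : (i+1) * (m'+1).choose (i+1) = (m'+1) * m'.choose i := by
      rw [Nat.add_one_mul_choose_eq m' i]; exact Nat.mul_comm _ _
    rw [this]
    calc (i+1) * ((m'+1).choose (i+1) * (n'-m').choose (s'-i)) * (n'+1)
        = ((i+1) * (m'+1).choose (i+1)) * ((n'-m').choose (s'-i) * (n'+1)) := by ring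
      _ = ((m'+1) * (m'.choose i * (n'-m').choose (s'-i))) * (n'+1) := by rw [h1']; ring
  rw [Finset.sum_congr rfl (fun i _ => step i), ← Finset.sum_mul, ← Finset.mul_sum,
    vand n' m' s' hm']
  have h2 : (n'+1) * n'.choose s' = (n'+1).choose (s'+1) * (s'+1) := Nat.add_one_mul_choose_eq n' s'
  calc (m'+1) * n'.choose s' * (n'+1) = (m'+1) * ((n'+1) * n'.choose s') := by ring
    _ = (s'+1) * (m'+1) * (n'+1).choose (s'+1) := by rw [h2]; ring

-- weighted Chebyshev sum inequality
lemma cheby (q : ℕ → ℝ) (hq : ∀ i, 0 ≤ q i) (x : ℝ) (hx0 : 0 ≤ x) (hx1 : x ≤ 1)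
    (t : Finset ℕ) :
    (∑ i ∈ t, q i) * (∑ i ∈ t, q i * i * x^i)
      ≤ (∑ i ∈ t, q i * i) * (∑ i ∈ t, q i * x^i) := by
  have key : 0 ≤ ∑ i ∈ t, ∑ j ∈ t, q i * q j * (((i:ℝ) - j) * (x^j - x^i)) := by
    apply Finset.sum_nonneg; intro i _
    apply Finset.sum_nonneg; intro j _
    apply mul_nonneg (mul_nonneg (hq i) (hq j))
    rcases le_total i j with h | h
    · have hx : x^j ≤ x^i := pow_le_pow_of_le_one hx0 hx1 h
      have : ((i:ℝ) - j) ≤ 0 := by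
        have := (Nat.cast_le (α := ℝ)).mpr h; linarith
      nlinarith
    · have hx : x^i ≤ x^j := pow_le_pow_of_le_one hx0 hx1 h
      have : (0:ℝ) ≤ (i:ℝ) - j := by
        have := (Nat.cast_le (α := ℝ)).mpr h; linarith
      exact mul_nonneg this (by linarith)
  have expand : ∑ i ∈ t, ∑ j ∈ t, q i * q j * (((i:ℝ) - j) * (x^j - x^i))
      = 2 * ((∑ i ∈ t, q i * i) * (∑ i ∈ t, q i * x^i)
           - (∑ i ∈ t, q i) * (∑ i ∈ t, q i * i * x^i)) := by
    have pt : ∀ i j : ℕ, q i * q j * (((i:ℝ) - j) * (x^j - x^i))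
        = (q i * i) * (q j * x^j) - (q i) * (q j * j * x^j)
          - (q i * i * x^i) * (q j) + (q i * x^i) * (q j * j) := by
      intro i j; ring
    calc ∑ i ∈ t, ∑ j ∈ t, q i * q j * (((i:ℝ) - j) * (x^j - x^i))
        = ∑ i ∈ t, ((q i * i) * (∑ j ∈ t, q j * x^j) - (q i) * (∑ j ∈ t, q j * j * x^j)
            - (q i * i * x^i) * (∑ j ∈ t, q j) + (q i * x^i) * (∑ j ∈ t, q j * j)) := by
          apply Finset.sum_congr rfl; intro i _
          rw [Finset.sum_congr rfl (fun j _ => pt i j)]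
          simp only [Finset.sum_add_distrib, Finset.sum_sub_distrib, ← Finset.mul_sum]
      _ = 2 * ((∑ i ∈ t, q i * i) * (∑ i ∈ t, q i * x^i)
           - (∑ i ∈ t, q i) * (∑ i ∈ t, q i * i * x^i)) := by
          simp only [Finset.sum_add_distrib, Finset.sum_sub_distrib, ← Finset.sum_mul]
          ring
  rw [expand] at key
  linarith

-- step identity
lemma stepid (n m s : ℕ) (hm : m ≤ n) (hs : s + 1 ≤ n) (x : ℝ) :
    ((s:ℝ)+1) * (∑ j ∈ range (s+1+1), (m.choose j : ℝ) * ((n-m).choose (s+1-j) : ℝ) * x^j)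
    = ∑ i ∈ range (s+1), (m.choose i : ℝ) * ((n-m).choose (s-i) : ℝ) * x^i
        * (((n:ℝ) - s) - (1-x) * ((m:ℝ) - i)) := by
  have key : ∀ i ∈ range (s+1),
      ((s+1-i : ℕ) : ℝ) * ((m.choose i : ℝ) * ((n-m).choose (s+1-i) : ℝ) * x^i)
      + ((i+1 : ℕ) : ℝ) * ((m.choose (i+1) : ℝ) * ((n-m).choose (s+1-(i+1)) : ℝ) * x^(i+1))
      = (m.choose i : ℝ) * ((n-m).choose (s-i) : ℝ) * x^i
          * (((n:ℝ) - s) - (1-x) * ((m:ℝ) - i)) := by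
    intro i hi
    have hsi : i ≤ s := by simpa [Nat.lt_succ_iff] using hi
    have e1 : s+1-i = (s-i)+1 := by omega
    have e2 : s+1-(i+1) = s-i := by omega
    rw [e1, e2]
    rcases Nat.eq_zero_or_pos (m.choose i) with hc | hc
    · have hc' : m.choose (i+1) = 0 := by
        rw [Nat.choose_eq_zero_iff] at hc ⊢; omega
      simp [hc, hc']
    rcases Nat.eq_zero_or_pos ((n-m).choose (s-i)) with hd | hd
    · have hd' : (n-m).choose ((s-i)+1) = 0 := by
        rw [Nat.choose_eq_zero_iff] at hd ⊢; omega
      simp [hd, hd']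
    have him : i ≤ m := by
      by_contra h; rw [Nat.choose_eq_zero_of_lt (by omega)] at hc; omega
    have hbi : s - i ≤ n - m := by
      by_contra h; rw [Nat.choose_eq_zero_of_lt (by omega)] at hd; omega
    have n1 := congrArg (Nat.cast (R := ℝ)) (Nat.choose_succ_right_eq (n-m) (s-i))
    have n2 := congrArg (Nat.cast (R := ℝ)) (Nat.choose_succ_right_eq m i)
    push_cast [Nat.cast_sub hbi, Nat.cast_sub hm, Nat.cast_sub hsi, Nat.cast_sub him] at n1 n2
    have ec : ((s-i+1 : ℕ) : ℝ) = (s:ℝ) - i + 1 := by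
      push_cast [Nat.cast_sub hsi]; ring
    rw [ec]
    calc ((s:ℝ)-i+1) * ((m.choose i : ℝ) * ((n-m).choose ((s-i)+1) : ℝ) * x^i)
        + ((i+1 : ℕ) : ℝ) * ((m.choose (i+1) : ℝ) * ((n-m).choose (s-i) : ℝ) * x^(i+1))
        = (m.choose i : ℝ) * x^i * (((n-m).choose ((s-i)+1) : ℝ) * ((s:ℝ)-i+1))
          + ((n-m).choose (s-i) : ℝ) * x^i * x * ((m.choose (i+1) : ℝ) * ((i:ℝ)+1)) := by
          push_cast; ring
      _ = (m.choose i : ℝ) * x^i * (((n-m).choose (s-i):ℝ) * ((n:ℝ)-m-((s:ℝ)-i)))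
          + ((n-m).choose (s-i) : ℝ) * x^i * x * ((m.choose i : ℝ) * ((m:ℝ)-i)) := by
          rw [n1, n2]
      _ = (m.choose i : ℝ) * ((n-m).choose (s-i) : ℝ) * x^i
          * (((n:ℝ) - s) - (1-x) * ((m:ℝ) - i)) := by ring
  have split : ∀ j ∈ range (s+1+1),
      ((s:ℝ)+1) * ((m.choose j : ℝ) * ((n-m).choose (s+1-j) : ℝ) * x^j)
      = ((s+1-j : ℕ) : ℝ) * ((m.choose j : ℝ) * ((n-m).choose (s+1-j) : ℝ) * x^j)
        + (j : ℝ) * ((m.choose j : ℝ) * ((n-m).choose (s+1-j) : ℝ) * x^j) := by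
    intro j hj
    have hj' : j ≤ s + 1 := by simpa [Nat.lt_succ_iff] using hj
    have : ((s+1-j : ℕ) : ℝ) = (s:ℝ) + 1 - j := by
      push_cast [Nat.cast_sub hj']; ring
    rw [this]; ring
  rw [Finset.mul_sum, Finset.sum_congr rfl split, Finset.sum_add_distrib]
  have S1 : ∑ j ∈ range (s+1+1),
      ((s+1-j : ℕ) : ℝ) * ((m.choose j : ℝ) * ((n-m).choose (s+1-j) : ℝ) * x^j)
      = ∑ i ∈ range (s+1),
        ((s+1-i : ℕ) : ℝ) * ((m.choose i : ℝ) * ((n-m).choose (s+1-i) : ℝ) * x^i) := by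
    rw [Finset.sum_range_succ]; simp
  have S2 : ∑ j ∈ range (s+1+1),
      (j : ℝ) * ((m.choose j : ℝ) * ((n-m).choose (s+1-j) : ℝ) * x^j)
      = ∑ i ∈ range (s+1),
        ((i+1 : ℕ) : ℝ) * ((m.choose (i+1) : ℝ) * ((n-m).choose (s+1-(i+1)) : ℝ) * x^(i+1)) := by
    rw [Finset.sum_range_succ']; simp
  rw [S1, S2, ← Finset.sum_add_distrib]
  exact Finset.sum_congr rfl key

-- MGF bound
lemma mgf (n m : ℕ) (hm : m ≤ n) (hn : 0 < n) (x : ℝ) (hx0 : 0 ≤ x) (hx1 : x ≤ 1) :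
    ∀ r, r ≤ n →
      ∑ j ∈ range (r+1), (m.choose j : ℝ) * ((n-m).choose (r-j) : ℝ) * x^j
        ≤ (n.choose r : ℝ) * (1 - (1-x)*m/n)^r := by
  intro r
  induction r with
  | zero => intro _; simp
  | succ s IH =>
    intro hs1
    have hs : s ≤ n := by omega
    have IH' := IH hs
    have hn0 : (0:ℝ) < n := by exact_mod_cast hn
    have hmn : (m:ℝ) ≤ n := by exact_mod_cast hm
    have hsn : (s:ℝ) ≤ n := by exact_mod_cast hs
    have hm0 : (0:ℝ) ≤ m := by positivity
    set T : ℝ := ∑ j ∈ range (s+1), (m.choose j:ℝ) * ((n-m).choose (s-j):ℝ) * x^j with hT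
    set V : ℝ := ∑ i ∈ range (s+1), (m.choose i:ℝ) * ((n-m).choose (s-i):ℝ) * (i:ℝ) * x^i with hV
    set c : ℝ := 1 - (1-x)*m/n with hc
    have hTnn : 0 ≤ T := by
      apply Finset.sum_nonneg; intro j _; positivity
    have hc0 : 0 ≤ c := by
      rw [hc]
      have h1 : (1-x)*m/n ≤ 1 := by
        rw [mul_div_assoc]
        have h2 : (m:ℝ)/n ≤ 1 := div_le_one_of_le₀ hmn hn0.le
        nlinarith [div_nonneg hm0 hn0.le]
      linarith
    -- Chebyshev
    have hch := cheby (fun i => (m.choose i:ℝ) * ((n-m).choose (s-i):ℝ))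
      (fun i => by positivity) x hx0 hx1 (range (s+1))
    have hv : ∑ i ∈ range (s+1), (m.choose i:ℝ) * ((n-m).choose (s-i):ℝ) = (n.choose s:ℝ) := by
      have := congrArg (Nat.cast (R := ℝ)) (vand n m s hm)
      push_cast at this
      exact this
    have hmean : (∑ i ∈ range (s+1), (m.choose i:ℝ) * ((n-m).choose (s-i):ℝ) * (i:ℝ)) * (n:ℝ)
        = (s:ℝ) * m * (n.choose s:ℝ) := by
      have := congrArg (Nat.cast (R := ℝ)) (meanid n m s hm)
      push_cast at this
      rw [← this, Finset.sum_mul]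
      exact Finset.sum_congr rfl (fun i _ => by ring)
    have hCpos : (0:ℝ) < (n.choose s:ℝ) := by exact_mod_cast Nat.choose_pos hs
    -- derive n * V ≤ s * m * T
    have hnV : (n:ℝ) * V ≤ (s:ℝ) * m * T := by
      rw [hv] at hch
      -- hch : C * (∑ q i * i * x^i) ≤ (∑ q i * i) * (∑ q i * x^i)
      have h3 : (n:ℝ) * ((n.choose s:ℝ) * V) ≤ (n:ℝ) * ((∑ i ∈ range (s+1), (m.choose i:ℝ) * ((n-m).choose (s-i):ℝ) * (i:ℝ)) * T) := by
        apply mul_le_mul_of_nonneg_left _ hn0.le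
        exact hch
      have h4 : (n:ℝ) * ((∑ i ∈ range (s+1), (m.choose i:ℝ) * ((n-m).choose (s-i):ℝ) * (i:ℝ)) * T)
          = (s:ℝ) * m * T * (n.choose s:ℝ) := by
        calc (n:ℝ) * ((∑ i ∈ range (s+1), (m.choose i:ℝ) * ((n-m).choose (s-i):ℝ) * (i:ℝ)) * T)
            = ((∑ i ∈ range (s+1), (m.choose i:ℝ) * ((n-m).choose (s-i):ℝ) * (i:ℝ)) * n) * T := by ring
          _ = (s:ℝ) * m * (n.choose s:ℝ) * T := by rw [hmean]
          _ = (s:ℝ) * m * T * (n.choose s:ℝ) := by ring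
      rw [h4] at h3
      have h5 : ((n:ℝ) * V) * (n.choose s:ℝ) ≤ ((s:ℝ) * m * T) * (n.choose s:ℝ) := by
        calc ((n:ℝ) * V) * (n.choose s:ℝ) = (n:ℝ) * ((n.choose s:ℝ) * V) := by ring
          _ ≤ (s:ℝ) * m * T * (n.choose s:ℝ) := h3
      exact le_of_mul_le_mul_right h5 hCpos
    -- step identity
    have hid : ((s:ℝ)+1) * (∑ j ∈ range (s+1+1), (m.choose j:ℝ) * ((n-m).choose (s+1-j):ℝ) * x^j)
        = ((n:ℝ)-s) * T - ((1-x)*m) * T + (1-x) * V := by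
      rw [stepid n m s hm hs1 x]
      calc ∑ i ∈ range (s+1), (m.choose i:ℝ) * ((n-m).choose (s-i):ℝ) * x^i
              * (((n:ℝ) - s) - (1-x) * ((m:ℝ) - i))
          = ∑ i ∈ range (s+1), (((n:ℝ)-s) * ((m.choose i:ℝ) * ((n-m).choose (s-i):ℝ) * x^i)
              - ((1-x)*m) * ((m.choose i:ℝ) * ((n-m).choose (s-i):ℝ) * x^i)
              + (1-x) * ((m.choose i:ℝ) * ((n-m).choose (s-i):ℝ) * (i:ℝ) * x^i)) :=
            Finset.sum_congr rfl (fun i _ => by ring)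
        _ = ((n:ℝ)-s) * T - ((1-x)*m) * T + (1-x) * V := by
            rw [Finset.sum_add_distrib, Finset.sum_sub_distrib, ← Finset.mul_sum,
              ← Finset.mul_sum, ← Finset.mul_sum]
    -- combine
    have hcomb : ((s:ℝ)+1) * (n.choose (s+1):ℝ) = ((n:ℝ)-s) * (n.choose s:ℝ) := by
      have := congrArg (Nat.cast (R := ℝ)) (Nat.choose_succ_right_eq n s)
      push_cast [Nat.cast_sub hs] at this
      linarith [this]
    have hx' : (0:ℝ) ≤ 1 - x := by linarith
    have halg : ((n:ℝ)-s) - (1-x)*m + (1-x)*s*m/n = ((n:ℝ)-s)*c := by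
      rw [hc]; field_simp; ring
    have hVle : V ≤ (s:ℝ)*m*T/n := by
      rw [le_div_iff₀ hn0]
      nlinarith [hnV]
    have hkey : ((s:ℝ)+1) * (∑ j ∈ range (s+1+1), (m.choose j:ℝ) * ((n-m).choose (s+1-j):ℝ) * x^j)
        ≤ ((s:ℝ)+1) * ((n.choose (s+1):ℝ) * c^(s+1)) := by
      rw [hid]
      have h6 : ((n:ℝ)-s) * T - ((1-x)*m) * T + (1-x) * V
          ≤ ((n:ℝ)-s) * T - ((1-x)*m) * T + (1-x) * ((s:ℝ)*m*T/n) := by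
        have := mul_le_mul_of_nonneg_left hVle hx'
        linarith
      have h7 : ((n:ℝ)-s) * T - ((1-x)*m) * T + (1-x) * ((s:ℝ)*m*T/n)
          = (((n:ℝ)-s)*c) * T := by
        rw [← halg]; ring
      have h8 : (((n:ℝ)-s)*c) * T ≤ (((n:ℝ)-s)*c) * ((n.choose s:ℝ) * c^s) := by
        apply mul_le_mul_of_nonneg_left IH'
        have : (0:ℝ) ≤ (n:ℝ) - s := by linarith
        positivity
      have h9 : (((n:ℝ)-s)*c) * ((n.choose s:ℝ) * c^s)
          = ((s:ℝ)+1) * ((n.choose (s+1):ℝ) * c^(s+1)) := by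
        calc (((n:ℝ)-s)*c) * ((n.choose s:ℝ) * c^s)
            = (((n:ℝ)-s) * (n.choose s:ℝ)) * (c * c^s) := by ring
          _ = (((s:ℝ)+1) * (n.choose (s+1):ℝ)) * (c^(s+1)) := by rw [← hcomb, pow_succ]; ring
          _ = ((s:ℝ)+1) * ((n.choose (s+1):ℝ) * c^(s+1)) := by ring
      exact ((h6.trans_eq h7).trans h8).trans_eq h9
    have hs1pos : (0:ℝ) < (s:ℝ)+1 := by positivity
    calc ∑ j ∈ range (s+1+1), (m.choose j:ℝ) * ((n-m).choose (s+1-j):ℝ) * x^j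
        ≤ (n.choose (s+1):ℝ) * c^(s+1) := by
          have := (mul_le_mul_iff_right₀ hs1pos).mp hkey
          exact this
      _ = (n.choose (s+1):ℝ) * (1 - (1-x)*m/n)^(s+1) := by rw [hc]

lemma logineq (δ : ℝ) (h0 : 0 < δ) (h1 : δ < 1) :
    δ^2/2 ≤ δ + (1-δ) * Real.log (1-δ) := by
  have h2 : (0:ℝ) < 1 - δ := by linarith
  have hlog : Real.log (1-δ) < 0 := Real.log_neg h2 (by linarith)
  have hu : 0 < -Real.log (1-δ) := by linarith
  have hsinh : -Real.log (1-δ) < Real.sinh (-Real.log (1-δ)) :=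
    Real.self_lt_sinh_iff.mpr hu
  rw [Real.sinh_eq] at hsinh
  have he : Real.exp (-(-Real.log (1-δ))) = 1 - δ := by rw [neg_neg, Real.exp_log h2]
  have he2 : Real.exp (-Real.log (1-δ)) = (1-δ)⁻¹ := by
    rw [Real.exp_neg, Real.exp_log h2]
  rw [he, he2] at hsinh
  have h3 := mul_lt_mul_of_pos_left hsinh h2
  have h4 : (1-δ) * (((1-δ)⁻¹ - (1-δ))/2) = (1 - (1-δ)^2)/2 := by
    field_simp
  nlinarith [h3, h4]

/-- Hypergeometric lower-tail bound: for `X ~ HG(n,m,r)` with expectation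
`μ = r*m/n`, and any `0 < δ < 1`, `Pr[X ≤ (1-δ)μ] ≤ exp(-μδ²/2)`. -/
theorem stmt_1 (n m r : ℕ) (hm : m ≤ n) (hr : r ≤ n) (hn : 0 < n)
    (δ : ℝ) (hδ0 : 0 < δ) (hδ1 : δ < 1) :
    (∑ j ∈ Finset.range (r + 1),
        if (j : ℝ) ≤ (1 - δ) * ((r : ℝ) * m / n) then
          ((m.choose j : ℝ) * ((n - m).choose (r - j) : ℝ) / (n.choose r : ℝ))
        else 0)
      ≤ Real.exp (-(((r : ℝ) * m / n) * δ ^ 2) / 2) := by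
  set μ : ℝ := (r : ℝ) * m / n with hμ
  set x : ℝ := 1 - δ with hxd
  have hx0 : 0 < x := by rw [hxd]; linarith
  have hx1 : x ≤ 1 := by rw [hxd]; linarith
  set k : ℝ := (1 - δ) * μ with hk
  have hn0 : (0:ℝ) < n := by exact_mod_cast hn
  have hμ0 : 0 ≤ μ := by rw [hμ]; positivity
  have hk0 : 0 ≤ k := by rw [hk]; nlinarith
  have hCpos : (0:ℝ) < (n.choose r : ℝ) := by exact_mod_cast Nat.choose_pos hr
  set xk : ℝ := x ^ (-k) with hxk
  have hxk0 : 0 ≤ xk := by rw [hxk]; positivity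
  -- termwise bound
  have hterm : ∀ j ∈ range (r+1),
      (if (j : ℝ) ≤ k then
          ((m.choose j : ℝ) * ((n - m).choose (r - j) : ℝ) / (n.choose r : ℝ))
        else 0)
      ≤ ((m.choose j : ℝ) * ((n - m).choose (r - j) : ℝ) * x^j) * (xk / (n.choose r : ℝ)) := by
    intro j _
    by_cases h : (j : ℝ) ≤ k
    · rw [if_pos h]
      have h1 : (1:ℝ) ≤ x ^ ((j:ℝ) - k) :=
        Real.one_le_rpow_of_pos_of_le_one_of_nonpos hx0 hx1 (by linarith)
      have h2 : x ^ ((j:ℝ) - k) = x^j * xk := by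
        rw [hxk, sub_eq_add_neg, Real.rpow_add hx0, Real.rpow_natCast]
      have h3 : (0:ℝ) ≤ (m.choose j : ℝ) * ((n - m).choose (r - j) : ℝ) / (n.choose r : ℝ) := by
        positivity
      calc (m.choose j : ℝ) * ((n - m).choose (r - j) : ℝ) / (n.choose r : ℝ)
          ≤ ((m.choose j : ℝ) * ((n - m).choose (r - j) : ℝ) / (n.choose r : ℝ)) * (x^((j:ℝ)-k)) := by
            nlinarith
        _ = ((m.choose j : ℝ) * ((n - m).choose (r - j) : ℝ) * x^j) * (xk / (n.choose r : ℝ)) := by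
            rw [h2]; ring
    · rw [if_neg h]
      positivity
  have hsum : (∑ j ∈ Finset.range (r + 1),
      if (j : ℝ) ≤ k then
          ((m.choose j : ℝ) * ((n - m).choose (r - j) : ℝ) / (n.choose r : ℝ))
        else 0)
      ≤ (∑ j ∈ range (r+1), (m.choose j : ℝ) * ((n - m).choose (r - j) : ℝ) * x^j)
          * (xk / (n.choose r : ℝ)) := by
    rw [Finset.sum_mul]
    exact Finset.sum_le_sum hterm
  have hmgf := mgf n m hm hn x hx0.le hx1 r hr
  have hc0 : (0:ℝ) ≤ 1 - (1-x)*m/n := by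
    have h2 : (m:ℝ)/n ≤ 1 := div_le_one_of_le₀ (by exact_mod_cast hm) hn0.le
    have h3 : (0:ℝ) ≤ (m:ℝ)/n := by positivity
    rw [mul_div_assoc]
    nlinarith
  have hchain : (∑ j ∈ range (r+1), (m.choose j : ℝ) * ((n - m).choose (r - j) : ℝ) * x^j)
        * (xk / (n.choose r : ℝ))
      ≤ (1 - (1-x)*m/n)^r * xk := by
    have := mul_le_mul_of_nonneg_right hmgf (div_nonneg hxk0 hCpos.le)
    calc (∑ j ∈ range (r+1), (m.choose j : ℝ) * ((n - m).choose (r - j) : ℝ) * x^j)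
        * (xk / (n.choose r : ℝ))
        ≤ ((n.choose r : ℝ) * (1 - (1-x)*m/n)^r) * (xk / (n.choose r : ℝ)) := this
      _ = (1 - (1-x)*m/n)^r * xk := by field_simp
  -- exponential bounds
  have hexp1 : (1 - (1-x)*m/n)^r ≤ Real.exp (-δ * μ) := by
    have h1 : 1 - (1-x)*m/n ≤ Real.exp (-(δ * m / n)) := by
      have := Real.add_one_le_exp (-(δ * (m:ℝ) / n))
      have he : (1-x) * (m:ℝ)/n = δ * m / n := by rw [hxd]; ring
      rw [he]; linarith
    calc (1 - (1-x)*m/n)^r ≤ (Real.exp (-(δ * m / n)))^r := pow_le_pow_left₀ hc0 h1 r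
      _ = Real.exp ((r:ℕ) * (-(δ * m / n))) := by rw [Real.exp_nat_mul]
      _ = Real.exp (-δ * μ) := by rw [hμ]; congr 1; ring
  have hexp2 : xk = Real.exp (-k * Real.log x) := by
    rw [hxk, Real.rpow_def_of_pos hx0]; congr 1; ring
  have hfinal : Real.exp (-δ * μ) * Real.exp (-k * Real.log x) ≤ Real.exp (-(μ * δ^2)/2) := by
    rw [← Real.exp_add]
    apply Real.exp_le_exp.mpr
    have hli := logineq δ hδ0 hδ1
    have : -δ * μ + -k * Real.log x = -μ * (δ + (1-δ) * Real.log (1-δ)) := by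
      rw [hk, hxd]; ring
    rw [this]
    nlinarith [hli, hμ0]
  calc (∑ j ∈ Finset.range (r + 1),
      if (j : ℝ) ≤ k then
          ((m.choose j : ℝ) * ((n - m).choose (r - j) : ℝ) / (n.choose r : ℝ))
        else 0)
      ≤ (1 - (1-x)*m/n)^r * xk := hsum.trans hchain
    _ ≤ Real.exp (-δ * μ) * Real.exp (-k * Real.log x) := by
        rw [← hexp2]
        exact mul_le_mul_of_nonneg_right hexp1 hxk0
    _ ≤ Real.exp (-(μ * δ^2)/2) := hfinal
end

section
/- If X is a hypergeometric random variable with parameters (n, m, r) with expectation μ = rm/n, then for any δ > 2e − 1, Pr[X > (1+δ)μ] < (1/2)^((1+δ)μ). -/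
private lemma descFac_aux (m n : ℕ) (h : m ≤ n) :
    ∀ j : ℕ, n ^ j * m.descFactorial j ≤ m ^ j * n.descFactorial j := by
  intro j
  induction j with
  | zero => simp
  | succ j ih =>
      rw [Nat.descFactorial_succ, Nat.descFactorial_succ, pow_succ, pow_succ]
      have key : n * (m - j) ≤ m * (n - j) := by
        rw [Nat.mul_sub, Nat.mul_sub]
        calc n * m - n * j ≤ n * m - m * j :=
              Nat.sub_le_sub_left (Nat.mul_le_mul_right j h) _
          _ = m * n - m * j := by rw [Nat.mul_comm]
      calc n ^ j * n * ((m - j) * m.descFactorial j)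
          = (n * (m - j)) * (n ^ j * m.descFactorial j) := by ring
        _ ≤ (m * (n - j)) * (m ^ j * n.descFactorial j) := Nat.mul_le_mul key ih
        _ = m ^ j * m * ((n - j) * n.descFactorial j) := by ring

private lemma nat_key (m n r j : ℕ) (hm : m ≤ n) (hr : r ≤ n) (hj : j ≤ r) :
    n ^ j * (m.choose j * (n - m).choose (r - j)) ≤ m ^ j * (r.choose j * n.choose r) := by
  by_cases hjm : j ≤ m
  · have h1 : n ^ j * m.choose j ≤ m ^ j * n.choose j := by
      have h := descFac_aux m n hm j
      rw [Nat.descFactorial_eq_factorial_mul_choose, Nat.descFactorial_eq_factorial_mul_choose] at h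
      have h' : j.factorial * (n ^ j * m.choose j) ≤ j.factorial * (m ^ j * n.choose j) := by
        calc j.factorial * (n ^ j * m.choose j) = n ^ j * (j.factorial * m.choose j) := by ring
          _ ≤ m ^ j * (j.factorial * n.choose j) := h
          _ = j.factorial * (m ^ j * n.choose j) := by ring
      exact Nat.le_of_mul_le_mul_left h' (Nat.factorial_pos j)
    have h2 : (n - m).choose (r - j) ≤ (n - j).choose (r - j) :=
      Nat.choose_le_choose _ (Nat.sub_le_sub_left hjm n)
    calc n ^ j * (m.choose j * (n - m).choose (r - j))
        = (n ^ j * m.choose j) * (n - m).choose (r - j) := by ring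
      _ ≤ (m ^ j * n.choose j) * (n - j).choose (r - j) := Nat.mul_le_mul h1 h2
      _ = m ^ j * (n.choose j * (n - j).choose (r - j)) := by ring
      _ = m ^ j * (n.choose r * r.choose j) := by rw [Nat.choose_mul hj]
      _ = m ^ j * (r.choose j * n.choose r) := by ring
  · have : m.choose j = 0 := Nat.choose_eq_zero_of_lt (Nat.lt_of_not_le hjm)
    simp [this]

private lemma pow_self_le (j : ℕ) (hj : 1 ≤ j) :
    (j : ℝ) ^ j ≤ (j.factorial : ℝ) * Real.exp 1 ^ (j - 1) := by
  induction j with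
  | zero => omega
  | succ j ih =>
      rcases Nat.eq_or_lt_of_le hj with h | h
      · simp [← h]
      · have hj1 : 1 ≤ j := by omega
        have hjpos : (0 : ℝ) < j := by positivity
        have hbase : ((j : ℝ) + 1) ^ j ≤ Real.exp 1 * (j : ℝ) ^ j := by
          have h1 : (1 : ℝ) + 1 / j ≤ Real.exp (1 / j) := by
            have := Real.add_one_le_exp (1 / (j : ℝ)); linarith
          have h2 : ((1 : ℝ) + 1 / j) ^ j ≤ Real.exp (1 / j) ^ j :=
            pow_le_pow_left₀ (by positivity) h1 j
          have h3 : Real.exp (1 / (j : ℝ)) ^ j = Real.exp 1 := by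
            rw [← Real.exp_nat_mul]
            congr 1
            field_simp
          have hmul : (1 + 1 / (j : ℝ)) * j = (j : ℝ) + 1 := by field_simp
          calc ((j : ℝ) + 1) ^ j = ((1 + 1 / j) * j) ^ j := by rw [hmul]
            _ = (1 + 1 / (j : ℝ)) ^ j * (j : ℝ) ^ j := mul_pow _ _ _
            _ ≤ Real.exp 1 * (j : ℝ) ^ j := by
                rw [h3] at h2
                exact mul_le_mul_of_nonneg_right h2 (by positivity)
        have ihj := ih hj1
        have hexp : Real.exp 1 * Real.exp 1 ^ (j - 1) = Real.exp 1 ^ j := by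
          rw [← pow_succ']
          congr 1; omega
        have hfac : ((j + 1).factorial : ℝ) = ((j : ℝ) + 1) * (j.factorial : ℝ) := by
          rw [Nat.factorial_succ]; push_cast; ring
        calc (((j + 1 : ℕ)) : ℝ) ^ (j + 1)
            = ((j : ℝ) + 1) * ((j : ℝ) + 1) ^ j := by push_cast; ring
          _ ≤ ((j : ℝ) + 1) * (Real.exp 1 * (j : ℝ) ^ j) := by
              apply mul_le_mul_of_nonneg_left hbase (by positivity)
          _ ≤ ((j : ℝ) + 1) * (Real.exp 1 * ((j.factorial : ℝ) * Real.exp 1 ^ (j - 1))) := by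
              apply mul_le_mul_of_nonneg_left _ (by positivity)
              exact mul_le_mul_of_nonneg_left ihj (le_of_lt (Real.exp_pos 1))
          _ = ((j + 1).factorial : ℝ) * (Real.exp 1 * Real.exp 1 ^ (j - 1)) := by
              rw [hfac]; ring
          _ = ((j + 1).factorial : ℝ) * Real.exp 1 ^ j := by rw [hexp]
          _ = ((j + 1).factorial : ℝ) * Real.exp 1 ^ (j + 1 - 1) := by norm_num

/-- Hypergeometric tail bound for large deviations: for `X ~ HG(n,m,r)` with
expectation `μ = r*m/n`, and any `δ > 2e - 1`, `Pr[X > (1+δ)μ] < (1/2)^((1+δ)μ)`. -/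
theorem stmt_2 (n m r : ℕ) (hm : m ≤ n) (hr : r ≤ n) (hn : 0 < n)
    (δ : ℝ) (hδ : δ > 2 * Real.exp 1 - 1) :
    (∑ j ∈ Finset.range (r + 1),
        if (1 + δ) * ((r : ℝ) * m / n) < (j : ℝ) then
          ((m.choose j : ℝ) * ((n - m).choose (r - j) : ℝ) / (n.choose r : ℝ))
        else 0)
      < ((1 : ℝ) / 2) ^ ((1 + δ) * ((r : ℝ) * m / n)) := by
  set e := Real.exp 1 with he
  have he2 : (2 : ℝ) < e := by
    have := Real.exp_one_gt_d9; rw [← he] at this; linarith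
  have hepos : (0 : ℝ) < e := by linarith
  set μ : ℝ := (r : ℝ) * m / n with hμ
  have hμ0 : 0 ≤ μ := by positivity
  set t : ℝ := (1 + δ) * μ with htdef
  have h2e : 2 * e < 1 + δ := by linarith
  have ht0 : 0 ≤ t := mul_nonneg (by linarith) hμ0
  have hnpos : (0 : ℝ) < n := by exact_mod_cast hn
  have hCnr : (0 : ℝ) < (n.choose r : ℝ) := by exact_mod_cast Nat.choose_pos hr
  -- per-term bound
  have hterm : ∀ j : ℕ, j ≤ r → t < j →
      (m.choose j : ℝ) * ((n - m).choose (r - j) : ℝ) / (n.choose r : ℝ)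
      ≤ (1 / 2 : ℝ) ^ j / e := by
    intro j hj htj
    have hj1 : 1 ≤ j := by
      by_contra h
      push_neg at h
      interval_cases j
      simp at htj; linarith
    -- step 1: prob ≤ μ^j / j!
    have hnat := nat_key m n r j hm hr hj
    have hnatR : (n : ℝ) ^ j * ((m.choose j : ℝ) * ((n - m).choose (r - j) : ℝ))
        ≤ (m : ℝ) ^ j * ((r.choose j : ℝ) * (n.choose r : ℝ)) := by exact_mod_cast hnat
    have hCrj : (j.factorial : ℝ) * (r.choose j : ℝ) ≤ (r : ℝ) ^ j := by
      have h := Nat.descFactorial_le_pow r j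
      rw [Nat.descFactorial_eq_factorial_mul_choose] at h
      exact_mod_cast h
    have hfacpos : (0 : ℝ) < (j.factorial : ℝ) := by exact_mod_cast Nat.factorial_pos j
    have step1 : (m.choose j : ℝ) * ((n - m).choose (r - j) : ℝ) / (n.choose r : ℝ)
        ≤ μ ^ j / j.factorial := by
      rw [div_le_div_iff₀ hCnr hfacpos]
      have hμj : μ ^ j = (r : ℝ) ^ j * (m : ℝ) ^ j / (n : ℝ) ^ j := by
        rw [hμ, div_pow, mul_pow]
      rw [hμj]
      rw [div_mul_eq_mul_div, le_div_iff₀ (by positivity : (0:ℝ) < (n:ℝ) ^ j)]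
      have hc1 : (j.factorial : ℝ) * ((n : ℝ) ^ j * ((m.choose j : ℝ) * ((n - m).choose (r - j) : ℝ)))
          ≤ (j.factorial : ℝ) * ((m : ℝ) ^ j * ((r.choose j : ℝ) * (n.choose r : ℝ))) :=
        mul_le_mul_of_nonneg_left hnatR (le_of_lt hfacpos)
      have hc2 : ((j.factorial : ℝ) * (r.choose j : ℝ)) * ((m : ℝ) ^ j * (n.choose r : ℝ))
          ≤ (r : ℝ) ^ j * ((m : ℝ) ^ j * (n.choose r : ℝ)) :=
        mul_le_mul_of_nonneg_right hCrj (by positivity)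
      nlinarith [hc1, hc2]
    -- step 2: μ^j / j! ≤ (1/2)^j / e
    have h2eμ : 2 * e * μ ≤ (j : ℝ) := by
      have : 2 * e * μ ≤ (1 + δ) * μ := mul_le_mul_of_nonneg_right (le_of_lt h2e) hμ0
      rw [← htdef] at this
      linarith
    have hA : (2 * e * μ) ^ j ≤ (j : ℝ) ^ j :=
      pow_le_pow_left₀ (by positivity) h2eμ j
    have hB := pow_self_le j hj1
    rw [← he] at hB
    have hexpj : e ^ (j - 1) * e = e ^ j := by
      rw [← pow_succ]; congr 1; omega
    have hkey : (2 ^ j * μ ^ j * e) * e ^ (j - 1) ≤ (j.factorial : ℝ) * e ^ (j - 1) := by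
      calc (2 ^ j * μ ^ j * e) * e ^ (j - 1)
          = 2 ^ j * μ ^ j * (e ^ (j - 1) * e) := by ring
        _ = 2 ^ j * μ ^ j * e ^ j := by rw [hexpj]
        _ = (2 * e * μ) ^ j := by rw [mul_pow, mul_pow]; ring
        _ ≤ (j : ℝ) ^ j := hA
        _ ≤ (j.factorial : ℝ) * e ^ (j - 1) := hB
    have hkey2 : 2 ^ j * μ ^ j * e ≤ (j.factorial : ℝ) :=
      le_of_mul_le_mul_right hkey (by positivity)
    have step2 : μ ^ j / (j.factorial : ℝ) ≤ (1 / 2 : ℝ) ^ j / e := by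
      rw [div_le_div_iff₀ hfacpos hepos]
      have h2j : ((1:ℝ)/2) ^ j * (2:ℝ) ^ j = 1 := by rw [← mul_pow]; norm_num
      calc μ ^ j * e = (((1:ℝ)/2) ^ j * 2 ^ j) * (μ ^ j * e) := by rw [h2j]; ring
        _ = ((1:ℝ)/2) ^ j * (2 ^ j * μ ^ j * e) := by ring
        _ ≤ ((1:ℝ)/2) ^ j * (j.factorial : ℝ) :=
            mul_le_mul_of_nonneg_left hkey2 (by positivity)
    exact le_trans step1 step2
  set j0 : ℕ := Nat.floor t + 1 with hj0
  have htj0 : t < (j0 : ℝ) := by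
    rw [hj0]; push_cast
    exact Nat.lt_floor_add_one t
  -- bound the sum
  have hsum1 : (∑ j ∈ Finset.range (r + 1),
        if t < (j : ℝ) then
          ((m.choose j : ℝ) * ((n - m).choose (r - j) : ℝ) / (n.choose r : ℝ))
        else 0)
      ≤ ∑ j ∈ Finset.range (r + 1), (if j0 ≤ j then (1 / 2 : ℝ) ^ j / e else 0) := by
    apply Finset.sum_le_sum
    intro j hjmem
    have hjr : j ≤ r := Finset.mem_range_succ_iff.mp hjmem
    by_cases hcond : t < (j : ℝ)
    · rw [if_pos hcond]
      have hj0le : j0 ≤ j := by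
        rw [hj0]
        have : Nat.floor t < j := (Nat.floor_lt ht0).mpr hcond
        omega
      rw [if_pos hj0le]
      exact hterm j hjr hcond
    · rw [if_neg hcond]
      positivity
  have hsum2 : (∑ j ∈ Finset.range (r + 1), (if j0 ≤ j then (1 / 2 : ℝ) ^ j / e else 0))
      ≤ 2 / e * (1 / 2 : ℝ) ^ j0 := by
    have hsub : Finset.range (r + 1) ⊆ Finset.range (j0 + (r + 1)) := by
      apply Finset.range_subset_range.mpr; omega
    have h1 : (∑ j ∈ Finset.range (r + 1), (if j0 ≤ j then (1 / 2 : ℝ) ^ j / e else 0))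
        ≤ ∑ j ∈ Finset.range (j0 + (r + 1)), (if j0 ≤ j then (1 / 2 : ℝ) ^ j / e else 0) := by
      apply Finset.sum_le_sum_of_subset_of_nonneg hsub
      intro i _ _
      positivity
    have h2 : (∑ j ∈ Finset.range (j0 + (r + 1)), (if j0 ≤ j then (1 / 2 : ℝ) ^ j / e else 0))
        = ∑ j ∈ Finset.Ico j0 (j0 + (r + 1)), (1 / 2 : ℝ) ^ j / e := by
      rw [Finset.range_eq_Ico, ← Finset.sum_Ico_consecutive _ (Nat.zero_le j0)
        (Nat.le_add_right j0 (r + 1))]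
      have hz : (∑ j ∈ Finset.Ico 0 j0, (if j0 ≤ j then (1 / 2 : ℝ) ^ j / e else 0)) = 0 := by
        apply Finset.sum_eq_zero
        intro i hi
        rw [Finset.mem_Ico] at hi
        rw [if_neg (by omega)]
      rw [hz, zero_add]
      apply Finset.sum_congr rfl
      intro i hi
      rw [Finset.mem_Ico] at hi
      rw [if_pos hi.1]
    have h3 : (∑ j ∈ Finset.Ico j0 (j0 + (r + 1)), (1 / 2 : ℝ) ^ j / e)
        = (1 / 2 : ℝ) ^ j0 / e * ∑ k ∈ Finset.range (r + 1), (1 / 2 : ℝ) ^ k := by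
      rw [Finset.sum_Ico_eq_sum_range]
      simp only [Nat.add_sub_cancel_left]
      rw [Finset.mul_sum]
      apply Finset.sum_congr rfl
      intro k _
      rw [pow_add]
      ring
    have h4 : (∑ k ∈ Finset.range (r + 1), (1 / 2 : ℝ) ^ k) ≤ 2 := by
      rw [geom_sum_eq (by norm_num : (1 / 2 : ℝ) ≠ 1)]
      rw [div_le_iff_of_neg (by norm_num : (1 / 2 : ℝ) - 1 < 0)]
      have : (0 : ℝ) ≤ (1 / 2 : ℝ) ^ (r + 1) := by positivity
      linarith
    calc (∑ j ∈ Finset.range (r + 1), (if j0 ≤ j then (1 / 2 : ℝ) ^ j / e else 0))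
        ≤ (1 / 2 : ℝ) ^ j0 / e * ∑ k ∈ Finset.range (r + 1), (1 / 2 : ℝ) ^ k := by
          rw [← h3, ← h2]; exact h1
      _ ≤ (1 / 2 : ℝ) ^ j0 / e * 2 := by
          apply mul_le_mul_of_nonneg_left h4 (by positivity)
      _ = 2 / e * (1 / 2 : ℝ) ^ j0 := by ring
  have hrpow : ((1 : ℝ) / 2) ^ (j0 : ℝ) ≤ ((1 : ℝ) / 2) ^ t := by
    apply Real.rpow_le_rpow_of_exponent_ge (by norm_num) (by norm_num)
    exact le_of_lt htj0
  have hcast : ((1 : ℝ) / 2) ^ (j0 : ℝ) = ((1 : ℝ) / 2) ^ j0 := Real.rpow_natCast _ j0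
  have hrpos : (0 : ℝ) < ((1 : ℝ) / 2) ^ t := Real.rpow_pos_of_pos (by norm_num) t
  have hfinal : 2 / e * (1 / 2 : ℝ) ^ j0 < ((1 : ℝ) / 2) ^ t := by
    have h5 : 2 / e * (1 / 2 : ℝ) ^ j0 ≤ 2 / e * ((1 : ℝ) / 2) ^ t := by
      apply mul_le_mul_of_nonneg_left _ (by positivity)
      rw [← hcast]; exact hrpow
    have h6 : 2 / e * ((1 : ℝ) / 2) ^ t < 1 * ((1 : ℝ) / 2) ^ t := by
      apply mul_lt_mul_of_pos_right _ hrpos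
      rw [div_lt_one hepos]; linarith
    linarith
  calc (∑ j ∈ Finset.range (r + 1),
        if t < (j : ℝ) then
          ((m.choose j : ℝ) * ((n - m).choose (r - j) : ℝ) / (n.choose r : ℝ))
        else 0)
      ≤ ∑ j ∈ Finset.range (r + 1), (if j0 ≤ j then (1 / 2 : ℝ) ^ j / e else 0) := hsum1
    _ ≤ 2 / e * (1 / 2 : ℝ) ^ j0 := hsum2
    _ < ((1 : ℝ) / 2) ^ t := hfinal
end

section
/- Let Γ and Γ' be two finite subsets of a linearly ordered finite universe U with |U| = N, and let p satisfy 1 ≤ p ≤ N. For a set S ⊆ U, define Λ_S to be the list of elements of U that first enumerates the elements of S in increasing order and then the elements of U \ S in increasing order, and define Top_p(S) = {Λ_S[a] : 1 ≤ a ≤ p} ∩ S (the first min(p, |S|) elements of this list that lie in S). Then |Top_p(Γ) Δ Top_p(Γ')| ≤ 2·|Γ Δ Γ'|, where Δ denotes symmetric difference. -/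
open Finset
open scoped symmDiff

/-- The list `Λ_S`: the elements of `S` in increasing order, followed by the
elements of the complement of `S` in increasing order. -/
noncomputable def lamList {U : Type*} [Fintype U] [LinearOrder U] (S : Finset U) : List U :=
  (S.sort (· ≤ ·)) ++ ((Sᶜ : Finset U).sort (· ≤ ·))

/-- `Top_p(S)`: the first `min(p,|S|)` elements of the list `Λ_S` that lie in `S`. -/
noncomputable def topP {U : Type*} [Fintype U] [LinearOrder U] (p : ℕ) (S : Finset U) :
    Finset U :=
  ((lamList S).take p).toFinset ∩ S

section Aux

set_option linter.unusedSectionVars false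

/-- Membership in a prefix of a strictly sorted list, in terms of the number of
smaller elements. -/
theorem aux_mem_take_sorted {U : Type*} [LinearOrder U] :
    ∀ (l : List U), l.Pairwise (· < ·) → ∀ (p : ℕ) (x : U),
      x ∈ l.take p ↔ x ∈ l ∧ l.countP (fun y => decide (y < x)) < p := by
  intro l hl
  induction l with
  | nil => simp
  | cons a t ih =>
    intro p x
    match p with
    | 0 => simp
    | q + 1 =>
      have hat : ∀ y ∈ t, a < y := fun y hy => List.rel_of_pairwise_cons hl hy
      by_cases hxa : x = a
      · subst hxa
        simp only [List.take_succ_cons, List.mem_cons, List.countP_cons]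
        have h0 : t.countP (fun y => decide (y < x)) = 0 := by
          rw [List.countP_eq_zero]
          intro y hy
          simp only [decide_eq_true_eq]
          exact not_lt.2 (hat y hy).le
        simp [h0]
      · simp only [List.take_succ_cons, List.mem_cons, List.countP_cons, hxa, false_or]
        rw [ih hl.of_cons q x]
        by_cases hxt : x ∈ t
        · have hax : a < x := hat x hxt
          simp [hxt, hax]
        · simp [hxt]

theorem aux_countP_sort {U : Type*} [LinearOrder U] (S : Finset U) (x : U) :
    (S.sort (· ≤ ·)).countP (fun y => decide (y < x)) = (S.filter (· < x)).card := by
  rw [Finset.filter, Finset.card, ← Multiset.countP_eq_card_filter, ← Finset.sort_eq (r := (· ≤ ·)) (s := S),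
    Multiset.coe_countP]

/-- `topP p S` consists of the elements of `S` of rank `< p` in `S`. -/
theorem aux_topP_eq {U : Type*} [Fintype U] [LinearOrder U] (p : ℕ) (S : Finset U) :
    topP p S = S.filter (fun x => (S.filter (· < x)).card < p) := by
  ext x
  simp only [topP, Finset.mem_inter, List.mem_toFinset, Finset.mem_filter]
  constructor
  · rintro ⟨hm, hx⟩
    refine ⟨hx, ?_⟩
    rw [lamList, List.take_append] at hm
    have hm' : x ∈ (S.sort (· ≤ ·)).take p := by
      rcases List.mem_append.1 hm with h | h
      · exact h
      · exact absurd (Finset.mem_sort (α := U) (· ≤ ·) |>.1 (List.mem_of_mem_take h))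
          (by simp [hx])
    have := (aux_mem_take_sorted _ (Finset.sortedLT_sort S).pairwise p x).1 hm'
    rw [aux_countP_sort] at this
    exact this.2
  · rintro ⟨hx, hr⟩
    refine ⟨?_, hx⟩
    rw [lamList, List.take_append]
    apply List.mem_append.2
    left
    rw [aux_mem_take_sorted _ (Finset.sortedLT_sort S).pairwise p x, aux_countP_sort]
    exact ⟨(Finset.mem_sort _).2 hx, hr⟩

theorem aux_rank_strict_mono {U : Type*} [LinearOrder U] {S : Finset U} {a b : U}
    (ha : a ∈ S) (hab : a < b) :
    (S.filter (· < a)).card < (S.filter (· < b)).card := by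
  apply Finset.card_lt_card
  constructor
  · exact Finset.monotone_filter_right S (fun y _ (hy : y < a) => hy.trans hab)
  · intro hsub
    have h1 : a ∈ S.filter (· < b) := Finset.mem_filter.2 ⟨ha, hab⟩
    have h2 := hsub h1
    simp at h2

/-- Inserting one element changes `topP` by at most two elements. -/
theorem aux_onestep {U : Type*} [Fintype U] [LinearOrder U] (p : ℕ) (S : Finset U) (x : U)
    (hx : x ∉ S) :
    ((topP p (insert x S)) ∆ (topP p S)).card ≤ 2 := by
  rw [aux_topP_eq, aux_topP_eq]
  set S' := insert x S with hS'
  have hrank : ∀ y ∈ S, (S'.filter (· < y)).card =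
      (S.filter (· < y)).card + (if x < y then 1 else 0) := by
    intro y hy
    rw [hS', Finset.filter_insert]
    split_ifs with h
    · rw [Finset.card_insert_of_notMem (fun hc => hx (Finset.mem_filter.1 hc).1)]
    · rw [Nat.add_zero]
  set C := S.filter (fun y => (S.filter (· < y)).card + 1 = p ∧ x < y) with hC
  have hsub : (S'.filter (fun y => (S'.filter (· < y)).card < p))
      ∆ (S.filter (fun y => (S.filter (· < y)).card < p)) ⊆ insert x C := by
    intro y hy
    rw [Finset.mem_symmDiff] at hy
    rcases hy with ⟨hy1, hy2⟩ | ⟨hy1, hy2⟩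
    · rcases Finset.mem_filter.1 hy1 with ⟨hyS', hylt⟩
      rcases Finset.mem_insert.1 hyS' with rfl | hyS
      · exact Finset.mem_insert_self _ _
      · exfalso
        apply hy2
        refine Finset.mem_filter.2 ⟨hyS, ?_⟩
        rw [hrank y hyS] at hylt
        split_ifs at hylt <;> omega
    · rcases Finset.mem_filter.1 hy1 with ⟨hyS, hylt⟩
      apply Finset.mem_insert.2
      right
      have hyS' : y ∈ S' := Finset.mem_insert_of_mem hyS
      have hge : ¬ (S'.filter (· < y)).card < p :=
        fun h => hy2 (Finset.mem_filter.2 ⟨hyS', h⟩)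
      rw [hrank y hyS] at hge
      refine Finset.mem_filter.2 ⟨hyS, ?_, ?_⟩
      · split_ifs at hge with h <;> omega
      · by_contra h
        rw [if_neg h] at hge
        omega
  have hC1 : C.card ≤ 1 := by
    apply Finset.card_le_one.2
    intro a ha b hb
    rcases Finset.mem_filter.1 ha with ⟨haS, ha2, _⟩
    rcases Finset.mem_filter.1 hb with ⟨hbS, hb2, _⟩
    by_contra hne
    rcases lt_or_gt_of_ne hne with h | h
    · have := aux_rank_strict_mono haS h; omega
    · have := aux_rank_strict_mono hbS h; omega
  calc ((S'.filter (fun y => (S'.filter (· < y)).card < p))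
        ∆ (S.filter (fun y => (S.filter (· < y)).card < p))).card
      ≤ (insert x C).card := Finset.card_le_card hsub
    _ ≤ C.card + 1 := Finset.card_insert_le _ _
    _ ≤ 2 := by omega

theorem aux_triangle {U : Type*} [Fintype U] [LinearOrder U] (A B C : Finset U) :
    (A ∆ C).card ≤ (A ∆ B).card + (B ∆ C).card := by
  calc (A ∆ C).card ≤ ((A ∆ B) ∪ (B ∆ C)).card :=
        Finset.card_le_card (symmDiff_triangle A B C)
    _ ≤ (A ∆ B).card + (B ∆ C).card := Finset.card_union_le _ _

theorem aux_main {U : Type*} [Fintype U] [LinearOrder U] (p : ℕ) :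
    ∀ (n : ℕ) (Γ Γ' : Finset U), (Γ ∆ Γ').card = n →
      ((topP p Γ) ∆ (topP p Γ')).card ≤ 2 * n := by
  intro n
  induction n with
  | zero =>
    intro Γ Γ' h
    have : Γ ∆ Γ' = ∅ := Finset.card_eq_zero.1 h
    have hΓ : Γ = Γ' := by
      rwa [show (∅ : Finset U) = ⊥ from rfl, symmDiff_eq_bot] at this
    simp [hΓ]
  | succ n ih =>
    intro Γ Γ' h
    have hne : (Γ ∆ Γ').Nonempty := Finset.card_pos.1 (by omega)
    obtain ⟨x, hxmem⟩ := hne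
    rw [Finset.mem_symmDiff] at hxmem
    rcases hxmem with ⟨hxΓ, hxΓ'⟩ | ⟨hxΓ', hxΓ⟩
    · -- x ∈ Γ, x ∉ Γ'
      set Γ₀ := Γ.erase x with hΓ₀
      have hins : Γ = insert x Γ₀ := (Finset.insert_erase hxΓ).symm
      have hxnot : x ∉ Γ₀ := Finset.notMem_erase _ _
      have hsd : Γ₀ ∆ Γ' = (Γ ∆ Γ').erase x := by
        ext y
        by_cases hyx : y = x
        · subst hyx
          simp [Finset.mem_symmDiff, hxΓ', hΓ₀]
        · simp only [Finset.mem_symmDiff, Finset.mem_erase, hΓ₀, hyx, not_false_iff,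
            true_and, and_true, Ne]
      have hxmem' : x ∈ Γ ∆ Γ' := Finset.mem_symmDiff.2 (Or.inl ⟨hxΓ, hxΓ'⟩)
      have hcard : (Γ₀ ∆ Γ').card = n := by
        rw [hsd, Finset.card_erase_of_mem hxmem', h]
        omega
      have h1 : ((topP p Γ) ∆ (topP p Γ₀)).card ≤ 2 := by
        rw [hins]
        exact aux_onestep p Γ₀ x hxnot
      have h2 := ih Γ₀ Γ' hcard
      have := aux_triangle (topP p Γ) (topP p Γ₀) (topP p Γ')
      omega
    · -- x ∈ Γ', x ∉ Γ
      set Γ₀ := Γ'.erase x with hΓ₀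
      have hins : Γ' = insert x Γ₀ := (Finset.insert_erase hxΓ').symm
      have hxnot : x ∉ Γ₀ := Finset.notMem_erase _ _
      have hsd : Γ ∆ Γ₀ = (Γ ∆ Γ').erase x := by
        ext y
        by_cases hyx : y = x
        · subst hyx
          simp [Finset.mem_symmDiff, hxΓ, hΓ₀]
        · simp only [Finset.mem_symmDiff, Finset.mem_erase, hΓ₀, hyx, not_false_iff,
            true_and, and_true, Ne]
      have hxmem' : x ∈ Γ ∆ Γ' := Finset.mem_symmDiff.2 (Or.inr ⟨hxΓ', hxΓ⟩)
      have hcard : (Γ ∆ Γ₀).card = n := by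
        rw [hsd, Finset.card_erase_of_mem hxmem', h]
        omega
      have h1 : ((topP p Γ₀) ∆ (topP p Γ')).card ≤ 2 := by
        rw [hins, symmDiff_comm]
        exact aux_onestep p Γ₀ x hxnot
      have h2 := ih Γ Γ₀ hcard
      have := aux_triangle (topP p Γ) (topP p Γ₀) (topP p Γ')
      omega

end Aux

/-- `|Top_p(Γ) Δ Top_p(Γ')| ≤ 2|Γ Δ Γ'|`. -/
theorem stmt_3 {U : Type*} [Fintype U] [LinearOrder U] (Γ Γ' : Finset U) (p : ℕ)
    (hp1 : 1 ≤ p) (hp2 : p ≤ Fintype.card U) :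
    ((topP p Γ) ∆ (topP p Γ')).card ≤ 2 * ((Γ ∆ Γ').card) := by
  exact aux_main p _ Γ Γ' rfl
end

section
/- Let U be a finite linearly ordered set, Γ, Γ' ⊆ U, and 1 ≤ p ≤ |U|. With Top_p(S) defined as the set of the first min(p,|S|) elements of S in the enumeration that lists S in increasing order followed by U\S in increasing order: if |Top_p(Γ)| = |Top_p(Γ')| = p, then Top_p(Γ) and Top_p(Γ') each consist of some number of the smallest elements of Γ ∩ Γ' together with elements of Γ \ Γ' (respectively Γ' \ Γ), and ||Top_p(Γ') ∩ (Γ∩Γ')| − |Top_p(Γ) ∩ (Γ∩Γ')|| ≤ |Γ \ Γ'| (assuming without loss of generality |Top_p(Γ) ∩ (Γ∩Γ')| ≤ |Top_p(Γ') ∩ (Γ∩Γ')|). -/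
open Finset
open scoped symmDiff

lemma take_mem_of_le {α : Type*} [Preorder α] {l : List α} (hl : l.Pairwise (· < ·))
    {p : ℕ} {x y : α} (hx : x ∈ l) (hy : y ∈ l.take p) (hxy : x ≤ y) : x ∈ l.take p := by
  obtain ⟨i, hi, hxi⟩ := List.getElem_of_mem hx
  rw [List.mem_take_iff_getElem] at hy ⊢
  obtain ⟨j', hj', hyj'⟩ := hy
  have hj'l : j' < l.length := lt_of_lt_of_le hj' (min_le_right _ _)
  have hij : i ≤ j' := by
    by_contra h
    push_neg at h
    have := List.pairwise_iff_getElem.mp hl j' i hj'l hi h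
    rw [hyj', hxi] at this
    exact absurd hxy (not_le_of_gt this)
  exact ⟨i, lt_of_le_of_lt hij hj', hxi⟩

lemma mem_topP_iff {U : Type*} [Fintype U] [LinearOrder U] {p : ℕ} {S : Finset U} {x : U} :
    x ∈ topP p S ↔ x ∈ S ∧ x ∈ (S.sort (· ≤ ·)).take p := by
  simp only [topP, mem_inter, List.mem_toFinset, lamList, List.take_append,
    List.mem_append]
  constructor
  · rintro ⟨h | h, hS⟩
    · exact ⟨hS, h⟩
    · exact absurd ((Finset.mem_sort _).mp (List.mem_of_mem_take h)) (by simp [hS])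
  · rintro ⟨hS, h⟩
    exact ⟨Or.inl h, hS⟩

lemma topP_dc {U : Type*} [Fintype U] [LinearOrder U] {p : ℕ} {S : Finset U} {x y : U}
    (hx : x ∈ S) (hy : y ∈ topP p S) (hxy : x ≤ y) : x ∈ topP p S := by
  rw [mem_topP_iff] at hy ⊢
  exact ⟨hx, take_mem_of_le (S.sortedLT_sort.pairwise) ((Finset.mem_sort _).mpr hx) hy.2 hxy⟩

lemma topP_subset {U : Type*} [Fintype U] [LinearOrder U] (p : ℕ) (S : Finset U) :
    topP p S ⊆ S := inter_subset_right

/-- If `|Top_p(Γ)| = |Top_p(Γ')| = p`, then `Top_p(Γ)` (resp. `Top_p(Γ')`) consists of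
some number of the smallest elements of `Γ ∩ Γ'` together with elements of `Γ \ Γ'`
(resp. `Γ' \ Γ`) — i.e. its intersection with `Γ ∩ Γ'` is downward closed within
`Γ ∩ Γ'` — and, assuming wlog `|Top_p(Γ) ∩ (Γ∩Γ')| ≤ |Top_p(Γ') ∩ (Γ∩Γ')|`,
`|Top_p(Γ') ∩ (Γ∩Γ')| - |Top_p(Γ) ∩ (Γ∩Γ')| ≤ |Γ \ Γ'|`. -/
theorem stmt_4 {U : Type*} [Fintype U] [LinearOrder U] (Γ Γ' : Finset U) (p : ℕ)
    (hp1 : 1 ≤ p) (hp2 : p ≤ Fintype.card U)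
    (h1 : (topP p Γ).card = p) (h2 : (topP p Γ').card = p)
    (hwlog : ((topP p Γ) ∩ (Γ ∩ Γ')).card ≤ ((topP p Γ') ∩ (Γ ∩ Γ')).card) :
    (∀ x ∈ Γ ∩ Γ', ∀ y ∈ (topP p Γ) ∩ (Γ ∩ Γ'), x ≤ y → x ∈ topP p Γ) ∧
    (∀ x ∈ Γ ∩ Γ', ∀ y ∈ (topP p Γ') ∩ (Γ ∩ Γ'), x ≤ y → x ∈ topP p Γ') ∧
    (topP p Γ) ⊆ (Γ ∩ Γ') ∪ (Γ \ Γ') ∧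
    (topP p Γ') ⊆ (Γ ∩ Γ') ∪ (Γ' \ Γ) ∧
    ((topP p Γ') ∩ (Γ ∩ Γ')).card - ((topP p Γ) ∩ (Γ ∩ Γ')).card ≤ (Γ \ Γ').card := by
  have hsub : topP p Γ ⊆ Γ := topP_subset p Γ
  have hsub' : topP p Γ' ⊆ Γ' := topP_subset p Γ'
  refine ⟨?_, ?_, ?_, ?_, ?_⟩
  · intro x hx y hy hxy
    exact topP_dc (mem_inter.mp hx).1 (mem_inter.mp hy).1 hxy
  · intro x hx y hy hxy
    exact topP_dc (mem_inter.mp hx).2 (mem_inter.mp hy).1 hxy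
  · intro x hx
    rcases em (x ∈ Γ') with h | h
    · exact mem_union_left _ (mem_inter.mpr ⟨hsub hx, h⟩)
    · exact mem_union_right _ (mem_sdiff.mpr ⟨hsub hx, h⟩)
  · intro x hx
    rcases em (x ∈ Γ) with h | h
    · exact mem_union_left _ (mem_inter.mpr ⟨h, hsub' hx⟩)
    · exact mem_union_right _ (mem_sdiff.mpr ⟨hsub' hx, h⟩)
  · have hpart : topP p Γ = (topP p Γ ∩ (Γ ∩ Γ')) ∪ (topP p Γ ∩ (Γ \ Γ')) := by
      ext x
      simp only [mem_union, mem_inter, mem_sdiff]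
      constructor
      · intro hx
        rcases em (x ∈ Γ') with h | h
        · exact Or.inl ⟨hx, hsub hx, h⟩
        · exact Or.inr ⟨hx, hsub hx, h⟩
      · rintro (⟨hx, _⟩ | ⟨hx, _⟩) <;> exact hx
    have hdisj : Disjoint (topP p Γ ∩ (Γ ∩ Γ')) (topP p Γ ∩ (Γ \ Γ')) := by
      apply Finset.disjoint_left.mpr
      intro a ha hb
      exact (mem_sdiff.mp (mem_inter.mp hb).2).2 (mem_inter.mp (mem_inter.mp ha).2).2
    have hcard : (topP p Γ ∩ (Γ ∩ Γ')).card + (topP p Γ ∩ (Γ \ Γ')).card = p := by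
      rw [← card_union_of_disjoint hdisj, ← hpart, h1]
    have h5 : (topP p Γ ∩ (Γ \ Γ')).card ≤ (Γ \ Γ').card :=
      card_le_card inter_subset_right
    have h6 : (topP p Γ' ∩ (Γ ∩ Γ')).card ≤ p := by
      calc _ ≤ (topP p Γ').card := card_le_card inter_subset_left
        _ = p := h2
    omega
end

section
/- Let Γ, Γ' ⊆ V×V×V where |V| = n, and let 1 ≤ r ≤ p ≤ n³. For R ⊆ {1,…,n³} define Y(R,Γ) = {Λ[a] : a ∈ R} ∩ Γ, where Λ lists the triples of Γ in increasing order followed by the remaining triples in increasing order (with respect to a fixed ordering on V×V×V). Then there exists a permutation π of {1,…,p} such that, when R is a uniformly random r-element subset of {1,…,p}, Pr[ |Y(R,Γ) Δ Y(π(R),Γ')| ≤ 22·r·|Γ Δ Γ'|/p + 100·log n ] ≥ 1 − 2·(1/2)^(11·r·|Γ Δ Γ'|/p + 50·log n). -/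
open Finset
open scoped symmDiff Classical

/-- `Y(R,Γ) = {Λ[a] : a ∈ R} ∩ Γ`, where `Λ` is the list `lamList Γ` and indices
in `R` select positions of that list. -/
noncomputable def Ysel {U : Type*} [Fintype U] [LinearOrder U] [Inhabited U]
    {p : ℕ} (R : Finset (Fin p)) (Γ : Finset U) : Finset U :=
  (R.image fun a => (lamList Γ).getD a.val default) ∩ Γ

set_option linter.unusedSectionVars false
set_option maxHeartbeats 1000000

section Aux
variable {U : Type*} [Fintype U] [LinearOrder U] [Inhabited U] (S : Finset U)

theorem lam_length : (lamList S).length = Fintype.card U := by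
  have := Finset.card_le_univ S
  simp only [lamList, List.length_append, Finset.length_sort, Finset.card_compl, Finset.card_univ] at *
  omega

theorem lam_nodup : (lamList S).Nodup := by
  refine List.Nodup.append (Finset.sort_nodup _ _) (Finset.sort_nodup _ _) ?_
  intro x hx hx'
  rw [Finset.mem_sort] at hx hx'
  simp at hx'
  exact hx' hx

theorem lam_mem (x : U) : x ∈ lamList S := by
  by_cases h : x ∈ S
  · exact List.mem_append_left _ ((Finset.mem_sort _).2 h)
  · exact List.mem_append_right _ ((Finset.mem_sort _).2 (by simpa using h))

noncomputable def idxL (S : Finset U) (x : U) : ℕ := (lamList S).idxOf x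

theorem idxL_lt (x : U) : idxL S x < Fintype.card U := by
  rw [← lam_length S]; exact List.idxOf_lt_length_iff.2 (lam_mem S x)

theorem getD_idxL (x : U) : (lamList S).getD (idxL S x) default = x := by
  rw [List.getD_eq_getElem _ _ (by rw [lam_length]; exact idxL_lt S x)]
  exact List.getElem_idxOf _

theorem idxL_getD (a : ℕ) (ha : a < Fintype.card U) :
    idxL S ((lamList S).getD a default) = a := by
  have ha' : a < (lamList S).length := by rw [lam_length]; exact ha
  rw [List.getD_eq_getElem _ _ ha']
  exact List.Nodup.idxOf_getElem (lam_nodup S) a ha'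

theorem getD_mem_iff (a : ℕ) (ha : a < Fintype.card U) :
    (lamList S).getD a default ∈ S ↔ a < S.card := by
  have ha' : a < (lamList S).length := by rw [lam_length]; exact ha
  rw [List.getD_eq_getElem _ _ ha']
  unfold lamList at ha' ⊢
  by_cases h : a < S.card
  · rw [List.getElem_append_left (by simpa using h)]
    exact iff_of_true ((Finset.mem_sort _).1 (List.getElem_mem _)) h
  · rw [List.getElem_append_right (by simpa using h)]
    have hmem : (Sᶜ.sort (· ≤ ·))[a - (S.sort (· ≤ ·)).length]'(by
        simp only [List.length_append, Finset.length_sort] at ha' ⊢; omega) ∈ Sᶜ :=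
      (Finset.mem_sort _).1 (List.getElem_mem _)
    simp only [Finset.mem_compl] at hmem
    exact ⟨fun h' => absurd h' hmem, fun h' => absurd h' h⟩

theorem idxL_lt_card_iff (x : U) : idxL S x < S.card ↔ x ∈ S := by
  conv_rhs => rw [← getD_idxL S x]
  rw [getD_mem_iff S _ (idxL_lt S x)]


theorem sorted_filter_lt_length {U : Type*} [LinearOrder U] (s : List U)
    (hs : List.Pairwise (· < ·) s) (i : ℕ) (hi : i < s.length) :
    (s.filter (fun y => y < s[i])).length = i := by
  have hsp := List.pairwise_iff_getElem.1 hs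
  obtain ⟨x, hx⟩ : ∃ x, s[i] = x := ⟨s[i], rfl⟩
  rw [hx]
  have : s.filter (fun y => y < x) = s.take i := by
    conv_lhs => rw [← List.take_append_drop i s]
    rw [List.filter_append]
    have h1 : (s.take i).filter (fun y => y < x) = s.take i := by
      rw [List.filter_eq_self]
      intro y hy
      obtain ⟨j, hj, rfl⟩ := List.mem_take_iff_getElem.1 hy
      have hji : j < i := by omega
      rw [← hx]; simpa using hsp j i (by omega) hi hji
    have h2 : (s.drop i).filter (fun y => y < x) = [] := by
      rw [List.filter_eq_nil_iff]
      intro y hy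
      obtain ⟨j, hj, rfl⟩ := List.mem_drop_iff_getElem.1 hy
      simp only [decide_eq_true_eq]
      rw [← hx]
      rcases Nat.eq_zero_or_pos j with rfl | hj0
      · simp
      · have := hsp i (i + j) hi (by omega) (by omega)
        simp only [not_lt]
        exact le_of_lt this
    rw [h1, h2, List.append_nil]
  rw [this, List.length_take]
  omega

theorem idxL_eq_card_filter (S : Finset U) (x : U) (hx : x ∈ S) :
    idxL S x = (S.filter (fun y => y < x)).card := by
  have hxs : x ∈ S.sort (· ≤ ·) := (Finset.mem_sort _).2 hx
  have h1 : idxL S x = (S.sort (· ≤ ·)).idxOf x := by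
    show (lamList S).idxOf x = _
    unfold lamList
    exact List.idxOf_append_of_mem hxs
  set s := S.sort (· ≤ ·) with hs
  have hi : s.idxOf x < s.length := List.idxOf_lt_length_iff.2 hxs
  have hget : s[s.idxOf x] = x := List.getElem_idxOf hi
  have h2 := sorted_filter_lt_length s (Finset.sortedLT_sort S).pairwise (s.idxOf x) hi
  rw [hget] at h2
  have h3 : (s.filter (fun y => y < x)).toFinset = S.filter (fun y => y < x) := by
    ext y
    simp [List.mem_filter, hs, Finset.mem_sort]
  have h4 : (s.filter (fun y => y < x)).toFinset.card
      = (s.filter (fun y => y < x)).length :=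
    List.toFinset_card_of_nodup ((Finset.sort_nodup _ _).filter _)
  rw [h1, ← h2, ← h4, h3]

theorem idxL_le_idxL (Γ Γ' : Finset U) (x : U) (hx : x ∈ Γ) (hx' : x ∈ Γ') :
    idxL Γ' x ≤ idxL Γ x + (Γ' \ Γ).card := by
  rw [idxL_eq_card_filter Γ' x hx', idxL_eq_card_filter Γ x hx]
  have hsub : Γ'.filter (fun y => y < x) ⊆ Γ.filter (fun y => y < x) ∪ (Γ' \ Γ) := by
    intro y hy
    simp only [Finset.mem_filter, Finset.mem_union, Finset.mem_sdiff] at *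
    by_cases hyΓ : y ∈ Γ
    · exact Or.inl ⟨hyΓ, hy.2⟩
    · exact Or.inr ⟨hy.1, hyΓ⟩
  calc (Γ'.filter (fun y => y < x)).card ≤ _ := Finset.card_le_card hsub
    _ ≤ _ := Finset.card_union_le _ _

theorem idxL_injective (S : Finset U) : Function.Injective (idxL S) := by
  intro x y h
  have := getD_idxL S x
  rw [h, getD_idxL S y] at this
  exact this.symm

theorem sdiff_filter_card_le (Γ Γ' : Finset U) (p : ℕ) :
    ((Γ'.filter (fun x => idxL Γ' x < p)) \ (Γ.filter (fun x => idxL Γ x < p))).card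
      ≤ (Γ' \ Γ).card + (Γ \ Γ').card := by
  classical
  set A := Γ.filter (fun x => idxL Γ x < p)
  set A' := Γ'.filter (fun x => idxL Γ' x < p)
  set B := (Γ' ∩ Γ).filter (fun x => idxL Γ' x < p ∧ p ≤ idxL Γ x) with hB
  have hsub : A' \ A ⊆ (Γ' \ Γ) ∪ B := by
    intro x hx
    simp only [A, A', B, Finset.mem_sdiff, Finset.mem_filter, Finset.mem_union,
      Finset.mem_inter, not_and, not_lt] at hx ⊢
    obtain ⟨⟨hxΓ', hxlt⟩, hnA⟩ := hx
    by_cases hxΓ : x ∈ Γ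
    · exact Or.inr ⟨⟨hxΓ', hxΓ⟩, hxlt, hnA hxΓ⟩
    · exact Or.inl ⟨hxΓ', hxΓ⟩
  have hBcard : B.card ≤ (Γ \ Γ').card := by
    have hmap : ∀ x ∈ B, idxL Γ x ∈ Finset.Ico p (p + (Γ \ Γ').card) := by
      intro x hx
      simp only [B, Finset.mem_filter, Finset.mem_inter] at hx
      obtain ⟨⟨hxΓ', hxΓ⟩, hlt, hge⟩ := hx
      have := idxL_le_idxL Γ' Γ x hxΓ' hxΓ
      simp only [Finset.mem_Ico]
      omega
    have := Finset.card_le_card_of_injOn (idxL Γ) hmap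
      ((idxL_injective Γ).injOn)
    simpa using this
  calc (A' \ A).card ≤ ((Γ' \ Γ) ∪ B).card := Finset.card_le_card hsub
    _ ≤ (Γ' \ Γ).card + B.card := Finset.card_union_le _ _
    _ ≤ _ := by omega

theorem key_perm (Γ Γ' : Finset U) (p : ℕ) (hp1 : 0 < p) (hpU : p ≤ Fintype.card U) :
    ∃ π : Equiv.Perm (Fin p), ∃ E : Finset (Fin p),
      E.card ≤ 2 * (Γ ∆ Γ').card ∧
      ∀ R : Finset (Fin p),
        ((Ysel R Γ) ∆ (Ysel (R.image π) Γ')).card ≤ 2 * (R ∩ E).card := by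
  classical
  set g : Fin p → U := fun a => (lamList Γ).getD a.val default with hg
  set g' : Fin p → U := fun a => (lamList Γ').getD a.val default with hg'
  have hidx : ∀ a : Fin p, idxL Γ (g a) = a.val := fun a =>
    idxL_getD Γ a.val (lt_of_lt_of_le a.isLt hpU)
  have hidx' : ∀ a : Fin p, idxL Γ' (g' a) = a.val := fun a =>
    idxL_getD Γ' a.val (lt_of_lt_of_le a.isLt hpU)
  set pos : U → Fin p := fun x => ⟨idxL Γ x % p, Nat.mod_lt _ hp1⟩ with hpos
  set pos' : U → Fin p := fun x => ⟨idxL Γ' x % p, Nat.mod_lt _ hp1⟩ with hpos'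
  have hgd : ∀ x : U, idxL Γ x < p → g (pos x) = x := by
    intro x h
    show (lamList Γ).getD _ default = x
    simp only [hpos, Nat.mod_eq_of_lt h]
    exact getD_idxL Γ x
  have hgd' : ∀ x : U, idxL Γ' x < p → g' (pos' x) = x := by
    intro x h
    show (lamList Γ').getD _ default = x
    simp only [hpos', Nat.mod_eq_of_lt h]
    exact getD_idxL Γ' x
  have hpos_g : ∀ a : Fin p, pos (g a) = a := by
    intro a; apply Fin.ext
    simp [hpos, hidx a, Nat.mod_eq_of_lt a.isLt]
  have hpos_g' : ∀ a : Fin p, pos' (g' a) = a := by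
    intro a; apply Fin.ext
    simp [hpos', hidx' a, Nat.mod_eq_of_lt a.isLt]
  set A : Finset U := Γ.filter (fun x => idxL Γ x < p) with hA
  set A' : Finset U := Γ'.filter (fun x => idxL Γ' x < p) with hA'
  set S : Finset (Fin p) := univ.filter (fun a => g a ∈ A ∩ A') with hS
  set T : Finset (Fin p) := univ.filter (fun b => g' b ∈ A ∩ A') with hT
  -- the matching equivalence
  have memT : ∀ a : Fin p, a ∈ S → pos' (g a) ∈ T ∧ g' (pos' (g a)) = g a := by
    intro a ha
    rw [hS, Finset.mem_filter] at ha
    have hmem := ha.2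
    have hlt : idxL Γ' (g a) < p := (Finset.mem_filter.1 (Finset.mem_inter.1 hmem).2).2
    have heq := hgd' (g a) hlt
    refine ⟨?_, heq⟩
    rw [hT, Finset.mem_filter]
    exact ⟨Finset.mem_univ _, by rw [heq]; exact hmem⟩
  have memS : ∀ b : Fin p, b ∈ T → pos (g' b) ∈ S ∧ g (pos (g' b)) = g' b := by
    intro b hb
    rw [hT, Finset.mem_filter] at hb
    have hmem := hb.2
    have hlt : idxL Γ (g' b) < p := (Finset.mem_filter.1 (Finset.mem_inter.1 hmem).1).2
    have heq := hgd (g' b) hlt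
    refine ⟨?_, heq⟩
    rw [hS, Finset.mem_filter]
    exact ⟨Finset.mem_univ _, by rw [heq]; exact hmem⟩
  set σ : {a : Fin p // a ∈ S} ≃ {b : Fin p // b ∈ T} :=
    { toFun := fun a => ⟨pos' (g a.1), (memT a.1 a.2).1⟩
      invFun := fun b => ⟨pos (g' b.1), (memS b.1 b.2).1⟩
      left_inv := by
        intro a
        apply Subtype.ext
        show pos (g' (pos' (g a.1))) = a.1
        rw [(memT a.1 a.2).2, hpos_g]
      right_inv := by
        intro b
        apply Subtype.ext
        show pos' (g (pos (g' b.1))) = b.1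
        rw [(memS b.1 b.2).2, hpos_g'] } with hσ
  have hcard : Fintype.card {a : Fin p // ¬ a ∈ S} = Fintype.card {b : Fin p // ¬ b ∈ T} := by
    have h1 := Fintype.card_congr σ
    have h2 := Fintype.card_subtype_compl (fun a : Fin p => a ∈ S)
    have h3 := Fintype.card_subtype_compl (fun b : Fin p => b ∈ T)
    rw [h2, h3, h1]
  set τ : {a : Fin p // ¬ a ∈ S} ≃ {b : Fin p // ¬ b ∈ T} := Fintype.equivOfCardEq hcard
    with hτ
  set π : Equiv.Perm (Fin p) :=
    ((Equiv.sumCompl (fun a => a ∈ S)).symm.trans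
      ((σ.sumCongr τ).trans (Equiv.sumCompl (fun b => b ∈ T)))) with hπ
  have hπ_mem : ∀ a : Fin p, a ∈ S → π a = pos' (g a) := by
    intro a ha
    simp only [hπ, Equiv.trans_apply, Equiv.sumCompl_symm_apply_of_pos ha,
      Equiv.sumCongr_apply, Sum.map_inl, Equiv.sumCompl_apply_inl]
    rfl
  have hπ_not_mem : ∀ a : Fin p, a ∉ S → π a ∉ T := by
    intro a ha
    simp only [hπ, Equiv.trans_apply, Equiv.sumCompl_symm_apply_of_neg ha,
      Equiv.sumCongr_apply, Sum.map_inr, Equiv.sumCompl_apply_inr]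
    exact (τ ⟨a, ha⟩).2
  -- bad position sets
  set D₁ : Finset (Fin p) := univ.filter (fun a => g a ∈ A \ A') with hD₁
  set D₂ : Finset (Fin p) := univ.filter (fun a => g' (π a) ∈ A' \ A) with hD₂
  set E : Finset (Fin p) := D₁ ∪ D₂ with hE
  refine ⟨π, E, ?_, ?_⟩
  · -- card bound
    have hd1 : D₁.card ≤ (A \ A').card := by
      apply Finset.card_le_card_of_injOn g
      · intro a ha
        simp only [Finset.mem_coe, hD₁, Finset.mem_filter] at ha
        exact ha.2
      · intro a _ b _ hab
        have := hidx a
        rw [hab, hidx b] at this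
        exact Fin.ext this.symm
    have hd2 : D₂.card ≤ (A' \ A).card := by
      apply Finset.card_le_card_of_injOn (fun a => g' (π a))
      · intro a ha
        simp only [Finset.mem_coe, hD₂, Finset.mem_filter] at ha
        exact ha.2
      · intro a _ b _ hab
        change g' (π a) = g' (π b) at hab
        have h1 := hidx' (π a)
        rw [hab, hidx' (π b)] at h1
        exact π.injective (Fin.ext h1.symm)
    have h1 : (A \ A').card ≤ (Γ \ Γ').card + (Γ' \ Γ).card := sdiff_filter_card_le Γ' Γ p
    have h2 : (A' \ A).card ≤ (Γ' \ Γ).card + (Γ \ Γ').card := sdiff_filter_card_le Γ Γ' p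
    have hsd : (Γ ∆ Γ').card = (Γ \ Γ').card + (Γ' \ Γ).card := by
      rw [symmDiff_def, Finset.sup_eq_union, Finset.card_union_of_disjoint (disjoint_sdiff_sdiff)]
    have h5 : E.card ≤ D₁.card + D₂.card := hE ▸ Finset.card_union_le D₁ D₂
    omega
  · intro R
    have hY : Ysel R Γ = (R.image g) ∩ Γ := rfl
    have hY' : Ysel (R.image π) Γ' = ((R.image π).image g') ∩ Γ' := rfl
    have hsd : ((Ysel R Γ) ∆ (Ysel (R.image π) Γ')).card
        = ((Ysel R Γ) \ (Ysel (R.image π) Γ')).card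
          + ((Ysel (R.image π) Γ') \ (Ysel R Γ)).card := by
      rw [symmDiff_def, Finset.sup_eq_union, Finset.card_union_of_disjoint (disjoint_sdiff_sdiff)]
    have hL : ((Ysel R Γ) \ (Ysel (R.image π) Γ')).card ≤ (R ∩ D₁).card := by
      apply Finset.card_le_card_of_injOn pos
      · intro x hx
        rw [Finset.mem_coe, Finset.mem_sdiff, hY, hY'] at hx
        obtain ⟨hx1, hx2⟩ := hx
        rw [Finset.mem_inter, Finset.mem_image] at hx1
        obtain ⟨⟨a, haR, hax⟩, hxΓ⟩ := hx1
        have hxA : x ∈ A := by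
          rw [hA, Finset.mem_filter]
          exact ⟨hxΓ, by rw [← hax, hidx a]; exact a.isLt⟩
        have hposx : pos x = a := by rw [← hax, hpos_g]
        have hxA' : x ∉ A' := by
          intro hxA'
          have haS : a ∈ S := by
            rw [hS, Finset.mem_filter]
            exact ⟨Finset.mem_univ _, by rw [hax]; exact Finset.mem_inter.2 ⟨hxA, hxA'⟩⟩
          apply hx2
          rw [Finset.mem_inter, Finset.mem_image]
          have hglt : idxL Γ' x < p := (Finset.mem_filter.1 hxA').2
          refine ⟨⟨π a, Finset.mem_image_of_mem π haR, ?_⟩, (Finset.mem_filter.1 hxA').1⟩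
          rw [hπ_mem a haS, hax]
          exact hgd' x hglt
        rw [Finset.mem_coe, Finset.mem_inter, hposx]
        refine ⟨haR, ?_⟩
        rw [hD₁, Finset.mem_filter]
        exact ⟨Finset.mem_univ _, by rw [hax]; exact Finset.mem_sdiff.2 ⟨hxA, hxA'⟩⟩
      · intro x hx y hy hxy
        rw [Finset.mem_coe, Finset.mem_sdiff, hY, Finset.mem_inter, Finset.mem_image] at hx hy
        obtain ⟨⟨⟨a, _, hax⟩, _⟩, _⟩ := hx
        obtain ⟨⟨⟨b, _, hby⟩, _⟩, _⟩ := hy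
        have h1 : g (pos x) = x := by rw [← hax, hpos_g]
        have h2 : g (pos y) = y := by rw [← hby, hpos_g]
        rw [← h1, ← h2, hxy]
    have hR : ((Ysel (R.image π) Γ') \ (Ysel R Γ)).card ≤ (R ∩ D₂).card := by
      apply Finset.card_le_card_of_injOn (fun x => π.symm (pos' x))
      · intro x hx
        rw [Finset.mem_coe, Finset.mem_sdiff, hY, hY'] at hx
        obtain ⟨hx1, hx2⟩ := hx
        rw [Finset.mem_inter, Finset.mem_image] at hx1
        obtain ⟨⟨b, hbR, hbx⟩, hxΓ'⟩ := hx1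
        rw [Finset.mem_image] at hbR
        obtain ⟨a, haR, hab⟩ := hbR
        have hxA' : x ∈ A' := by
          rw [hA', Finset.mem_filter]
          exact ⟨hxΓ', by rw [← hbx, hidx' b]; exact b.isLt⟩
        have hposx : pos' x = b := by rw [← hbx, hpos_g']
        have hsymm : π.symm (pos' x) = a := by
          rw [hposx, ← hab, Equiv.symm_apply_apply]
        have hxA : x ∉ A := by
          intro hxA
          have hpS : pos x ∈ S := by
            rw [hS, Finset.mem_filter]
            refine ⟨Finset.mem_univ _, ?_⟩
            rw [hgd x (Finset.mem_filter.1 hxA).2]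
            exact Finset.mem_inter.2 ⟨hxA, hxA'⟩
          have hππ : π (pos x) = b := by
            rw [hπ_mem _ hpS, hgd x (Finset.mem_filter.1 hxA).2, hposx]
          have haeq : pos x = a := by
            apply π.injective
            rw [hππ, hab]
          apply hx2
          rw [Finset.mem_inter, Finset.mem_image]
          refine ⟨⟨a, haR, ?_⟩, (Finset.mem_filter.1 hxA).1⟩
          rw [← haeq]
          exact hgd x (Finset.mem_filter.1 hxA).2
        rw [Finset.mem_coe, Finset.mem_inter, show (fun x => π.symm (pos' x)) x = a from hsymm]
        refine ⟨haR, ?_⟩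
        rw [hD₂, Finset.mem_filter]
        refine ⟨Finset.mem_univ _, ?_⟩
        have hπa : π a = pos' x := by rw [← hsymm, Equiv.apply_symm_apply]
        rw [hπa, hposx, hbx]
        exact Finset.mem_sdiff.2 ⟨hxA', hxA⟩
      · intro x hx y hy hxy
        rw [Finset.mem_coe, Finset.mem_sdiff, hY', Finset.mem_inter, Finset.mem_image] at hx hy
        obtain ⟨⟨⟨b, _, hbx⟩, _⟩, _⟩ := hx
        obtain ⟨⟨⟨c, _, hcy⟩, _⟩, _⟩ := hy
        have h1 : g' (pos' x) = x := by rw [← hbx, hpos_g']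
        have h2 : g' (pos' y) = y := by rw [← hcy, hpos_g']
        have := π.symm.injective hxy
        rw [← h1, ← h2, this]
    have hE1 : (R ∩ D₁).card ≤ (R ∩ E).card :=
      Finset.card_le_card (Finset.inter_subset_inter (Finset.Subset.refl R) Finset.subset_union_left)
    have hE2 : (R ∩ D₂).card ≤ (R ∩ E).card :=
      Finset.card_le_card (Finset.inter_subset_inter (Finset.Subset.refl R) Finset.subset_union_right)
    omega

end Aux

theorem count_lemma {p : ℕ} (E : Finset (Fin p)) (k r : ℕ) :
    (((Finset.univ : Finset (Fin p)).powersetCard r).filter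
        (fun R => k ≤ (R ∩ E).card)).card ≤ E.card.choose k * (p - k).choose (r - k) := by
  classical
  have claim : ∀ Q : Finset (Fin p), Q ∈ E.powersetCard k →
      (((Finset.univ : Finset (Fin p)).powersetCard r).filter (fun R => Q ⊆ R)).card
        ≤ (p - k).choose (r - k) := by
    intro Q hQ
    rw [Finset.mem_powersetCard] at hQ
    obtain ⟨hQE, hQk⟩ := hQ
    by_cases hkr : k ≤ r
    · have : (((Finset.univ : Finset (Fin p)).powersetCard r).filter (fun R => Q ⊆ R)).card
          ≤ ((Qᶜ : Finset (Fin p)).powersetCard (r - k)).card := by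
        apply Finset.card_le_card_of_injOn (fun R => R \ Q)
        · intro R hR
          rw [Finset.mem_coe, Finset.mem_filter, Finset.mem_powersetCard] at hR
          obtain ⟨⟨_, hRr⟩, hQR⟩ := hR
          rw [Finset.mem_coe, Finset.mem_powersetCard]
          constructor
          · intro x hx
            rw [Finset.mem_sdiff] at hx
            simpa using hx.2
          · rw [Finset.card_sdiff_of_subset hQR, hRr, hQk]
        · intro R hR R' hR' hRR'
          rw [Finset.mem_coe, Finset.mem_filter] at hR hR'
          have h1 : R \ Q ∪ Q = R := Finset.sdiff_union_of_subset hR.2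
          have h2 : R' \ Q ∪ Q = R' := Finset.sdiff_union_of_subset hR'.2
          rw [← h1, ← h2]
          change R \ Q = R' \ Q at hRR'
          rw [hRR']
      rw [Finset.card_powersetCard, Finset.card_compl, Fintype.card_fin, hQk] at this
      exact this
    · -- k > r : filter is empty since no R of card r contains Q of card k
      have : (((Finset.univ : Finset (Fin p)).powersetCard r).filter (fun R => Q ⊆ R)) = ∅ := by
        rw [Finset.filter_eq_empty_iff]
        intro R hR hQR
        rw [Finset.mem_powersetCard] at hR
        have := Finset.card_le_card hQR
        omega
      rw [this]
      simp
  have hsub : (((Finset.univ : Finset (Fin p)).powersetCard r).filter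
      (fun R => k ≤ (R ∩ E).card)) ⊆
      (E.powersetCard k).biUnion (fun Q =>
        ((Finset.univ : Finset (Fin p)).powersetCard r).filter (fun R => Q ⊆ R)) := by
    intro R hR
    rw [Finset.mem_filter] at hR
    obtain ⟨hR1, hR2⟩ := hR
    obtain ⟨Q, hQsub, hQcard⟩ := Finset.exists_subset_card_eq hR2
    rw [Finset.mem_biUnion]
    refine ⟨Q, ?_, ?_⟩
    · rw [Finset.mem_powersetCard]
      exact ⟨hQsub.trans Finset.inter_subset_right, hQcard⟩
    · rw [Finset.mem_filter]
      exact ⟨hR1, hQsub.trans Finset.inter_subset_left⟩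
  calc _ ≤ _ := Finset.card_le_card hsub
    _ ≤ ∑ Q ∈ E.powersetCard k, (((Finset.univ : Finset (Fin p)).powersetCard r).filter
          (fun R => Q ⊆ R)).card := Finset.card_biUnion_le
    _ ≤ (E.powersetCard k).card * (p - k).choose (r - k) := by
        rw [← smul_eq_mul]
        exact Finset.sum_le_card_nsmul _ _ _ claim
    _ = E.card.choose k * (p - k).choose (r - k) := by rw [Finset.card_powersetCard]

theorem desc_lemma {r p : ℕ} (hrp : r ≤ p) : ∀ k : ℕ,
    r.descFactorial k * p ^ k ≤ p.descFactorial k * r ^ k := by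
  intro k
  induction k with
  | zero => simp
  | succ k ih =>
    rw [Nat.descFactorial_succ, Nat.descFactorial_succ, pow_succ, pow_succ]
    have h : (r - k) * p ≤ (p - k) * r := by
      rcases le_or_gt r k with h' | h'
      · simp [Nat.sub_eq_zero_of_le h']
      · have h1 : k * r ≤ k * p := Nat.mul_le_mul_left k hrp
        have h2 : (r - k) * p = r * p - k * p := Nat.sub_mul r k p
        have h3 : (p - k) * r = p * r - k * r := Nat.sub_mul p k r
        have h4 : r * p = p * r := Nat.mul_comm r p
        have h5 : k * p ≤ r * p := Nat.mul_le_mul_right p (le_of_lt h')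
        omega
    calc r.descFactorial (k + 1) * (p ^ k * p)
        = ((r - k) * p) * (r.descFactorial k * p ^ k) := by
          rw [Nat.descFactorial_succ]; ring
      _ ≤ ((p - k) * r) * (p.descFactorial k * r ^ k) := Nat.mul_le_mul h ih
      _ = (p - k) * p.descFactorial k * (r ^ k * r) := by ring

theorem pow_le_exp_mul_factorial : ∀ k : ℕ, (k : ℝ) ^ k ≤ Real.exp 1 ^ k * k.factorial := by
  intro k
  induction k with
  | zero => simp
  | succ k ih =>
    rcases Nat.eq_zero_or_pos k with rfl | hk
    · simpa using Real.one_le_exp (by norm_num)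
    have hk0 : (k : ℝ) ≠ 0 := Nat.cast_ne_zero.2 hk.ne'
    have hstep : ((k : ℝ) + 1) ^ k ≤ Real.exp 1 * (k : ℝ) ^ k := by
      have h1 : ((k : ℝ) + 1) = (k : ℝ) * (1 + 1 / k) := by field_simp
      rw [h1, mul_pow]
      have h2 : (1 + 1 / (k : ℝ)) ^ k ≤ Real.exp 1 := by
        have h3 : (1 + 1 / (k : ℝ)) ≤ Real.exp (1 / k) := by
          have := Real.add_one_le_exp (1 / (k : ℝ))
          linarith
        calc (1 + 1 / (k : ℝ)) ^ k ≤ Real.exp (1 / k) ^ k := by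
              apply pow_le_pow_left₀ (by positivity) h3
          _ = Real.exp 1 := by
              rw [← Real.exp_nat_mul]
              congr 1
              field_simp
        
      calc (k : ℝ) ^ k * (1 + 1 / (k : ℝ)) ^ k ≤ (k : ℝ) ^ k * Real.exp 1 := by
            apply mul_le_mul_of_nonneg_left h2 (by positivity)
        _ = Real.exp 1 * (k : ℝ) ^ k := by ring
    have hcast : ((k + 1 : ℕ) : ℝ) = (k : ℝ) + 1 := by push_cast; ring
    rw [hcast, pow_succ]
    calc ((k : ℝ) + 1) ^ k * ((k : ℝ) + 1)
        ≤ (Real.exp 1 * (k : ℝ) ^ k) * ((k : ℝ) + 1) := by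
          apply mul_le_mul_of_nonneg_right hstep (by positivity)
      _ ≤ (Real.exp 1 * (Real.exp 1 ^ k * k.factorial)) * ((k : ℝ) + 1) := by
          apply mul_le_mul_of_nonneg_right _ (by positivity)
          exact mul_le_mul_of_nonneg_left ih (le_of_lt (Real.exp_pos 1))
      _ = Real.exp 1 ^ (k + 1) * ((k + 1) * k.factorial) := by ring
      _ = Real.exp 1 ^ (k + 1) * (k + 1).factorial := by
          rw [Nat.factorial_succ]; push_cast; ring

set_option maxHeartbeats 2000000 in
theorem prob_lemma {p r : ℕ} (hr : 1 ≤ r) (hrp : r ≤ p) (E : Finset (Fin p)) (m : ℕ)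
    (hE : E.card ≤ 2 * m) (t : ℝ) (ht0 : 0 ≤ t) (htm : 11 * m * r / p ≤ t) :
    (((((Finset.univ : Finset (Fin p)).powersetCard r).filter
          (fun R => ((R ∩ E).card : ℝ) ≤ t)).card : ℝ))
        / ((((Finset.univ : Finset (Fin p)).powersetCard r)).card : ℝ)
      ≥ 1 - 2 * ((1 : ℝ) / 2) ^ t := by
  classical
  have hp1 : 1 ≤ p := le_trans hr hrp
  set PP : Finset (Finset (Fin p)) := (Finset.univ : Finset (Fin p)).powersetCard r with hPP
  have hNcard : PP.card = p.choose r := by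
    rw [hPP, Finset.card_powersetCard, Finset.card_univ, Fintype.card_fin]
  have hNpos : 0 < PP.card := by rw [hNcard]; exact Nat.choose_pos hrp
  set k : ℕ := Nat.floor t + 1 with hk
  have hkt : t < (k : ℝ) := by
    rw [hk]; push_cast; exact Nat.lt_floor_add_one t
  have hk1 : 1 ≤ k := by omega
  -- bad set
  set bad := PP.filter (fun R => ¬ (((R ∩ E).card : ℝ) ≤ t)) with hbad
  have hgoodbad : (PP.filter (fun R => ((R ∩ E).card : ℝ) ≤ t)).card + bad.card = PP.card :=
    Finset.card_filter_add_card_filter_not _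
  have hbadsub : bad ⊆ PP.filter (fun R => k ≤ (R ∩ E).card) := by
    intro R hR
    rw [hbad, Finset.mem_filter] at hR
    rw [Finset.mem_filter]
    refine ⟨hR.1, ?_⟩
    have : t < ((R ∩ E).card : ℝ) := lt_of_not_ge hR.2
    have := (Nat.floor_lt ht0).2 this
    omega
  have hbadcard : bad.card ≤ E.card.choose k * (p - k).choose (r - k) :=
    le_trans (Finset.card_le_card hbadsub) (count_lemma E k r)
  -- key real bound
  have hrpow_pos : (0:ℝ) < ((1 : ℝ) / 2) ^ t := Real.rpow_pos_of_pos (by norm_num) t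
  have hkey : (bad.card : ℝ) ≤ (PP.card : ℝ) * (2 * ((1 : ℝ) / 2) ^ t) := by
    by_cases hkr : k ≤ r
    · by_cases hkE : k ≤ E.card
      · -- main case
        have hm1 : 1 ≤ m := by omega
        -- choose identity
        have hid : p.choose r * r.choose k = p.choose k * (p - k).choose (r - k) :=
          Nat.choose_mul hkr
        have hpk_pos : 0 < p.choose k := Nat.choose_pos (le_trans hkr hrp)
        -- real quantities
        have hstep1 : (bad.card : ℝ) ≤ (E.card.choose k : ℝ) * ((p - k).choose (r - k) : ℝ) := by
          exact_mod_cast hbadcard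
        have hstep2 : ((p - k).choose (r - k) : ℝ)
            = (p.choose r : ℝ) * (r.choose k : ℝ) / (p.choose k : ℝ) := by
          rw [eq_div_iff (show ((p.choose k : ℝ)) ≠ 0 by exact_mod_cast hpk_pos.ne')]
          exact_mod_cast (Nat.mul_comm ((p-k).choose (r-k)) (p.choose k)).trans hid.symm
        -- ratio bound : r.choose k / p.choose k ≤ (r/p)^k
        have hdesc := desc_lemma hrp k
        have hdescp_pos : 0 < p.descFactorial k :=
          Nat.pos_of_ne_zero (fun h =>
            absurd (Nat.descFactorial_eq_zero_iff_lt.1 h) (not_lt.2 (le_trans hkr hrp)))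
        have hratio : (r.choose k : ℝ) / (p.choose k : ℝ) ≤ ((r : ℝ) / p) ^ k := by
          have hfac : (0:ℝ) < (k.factorial : ℝ) := by exact_mod_cast k.factorial_pos
          have hcr : (r.choose k : ℝ) = (r.descFactorial k : ℝ) / k.factorial := by
            rw [eq_div_iff hfac.ne']
            exact_mod_cast (Nat.mul_comm (k.factorial) (r.choose k)).symm.trans
              (Nat.descFactorial_eq_factorial_mul_choose r k).symm
          have hcp : (p.choose k : ℝ) = (p.descFactorial k : ℝ) / k.factorial := by
            rw [eq_div_iff hfac.ne']
            exact_mod_cast (Nat.mul_comm (k.factorial) (p.choose k)).symm.trans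
              (Nat.descFactorial_eq_factorial_mul_choose p k).symm
          rw [hcr, hcp, div_div_div_cancel_right₀]
          · rw [div_pow, div_le_div_iff₀ (by exact_mod_cast hdescp_pos) (by positivity)]
            exact_mod_cast (Nat.mul_comm (r ^ k) (p.descFactorial k)) ▸ hdesc
          · exact hfac.ne'
        -- choose(E,k) ≤ (2m)^k / k!
        have hfacpos : (0:ℝ) < (k.factorial : ℝ) := by exact_mod_cast k.factorial_pos
        have hEch : (E.card.choose k : ℝ) ≤ ((2*m : ℝ)) ^ k / k.factorial := by
          rw [le_div_iff₀ hfacpos]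
          have h1 : E.card.choose k * k.factorial ≤ (2*m)^k := by
            calc E.card.choose k * k.factorial = E.card.descFactorial k := by
                  rw [Nat.descFactorial_eq_factorial_mul_choose]; ring
              _ ≤ E.card ^ k := Nat.descFactorial_le_pow _ _
              _ ≤ (2*m)^k := Nat.pow_le_pow_left hE k
          exact_mod_cast h1
        have hppos : (0:ℝ) < (p:ℝ) := by exact_mod_cast hp1
        have hkpos : (0:ℝ) < (k:ℝ) := by exact_mod_cast hk1
        have hmpos : (0:ℝ) < (m:ℝ) := by exact_mod_cast hm1
        have hrpos : (0:ℝ) < (r:ℝ) := by exact_mod_cast hr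
        have hepos : (0:ℝ) < Real.exp 1 := Real.exp_pos 1
        have hkk : (0:ℝ) < (k:ℝ)^k := by positivity
        -- 1/k! ≤ e^k / k^k
        have hfe : (1:ℝ) / k.factorial ≤ Real.exp 1 ^ k / (k:ℝ)^k := by
          rw [div_le_div_iff₀ hfacpos hkk]
          calc (1:ℝ) * (k:ℝ)^k = (k:ℝ)^k := by ring
            _ ≤ Real.exp 1 ^ k * k.factorial := pow_le_exp_mul_factorial k
        -- the product bound
        have hprod : (E.card.choose k : ℝ) * ((r.choose k : ℝ) / (p.choose k : ℝ))
            ≤ (2 * Real.exp 1 * m * r / (p * k)) ^ k := by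
          have h1 : (E.card.choose k : ℝ) * ((r.choose k : ℝ) / (p.choose k : ℝ))
              ≤ ((2*m : ℝ)) ^ k / k.factorial * ((r : ℝ) / p) ^ k := by
            apply mul_le_mul hEch hratio (by positivity) (by positivity)
          have h2 : ((2*m : ℝ)) ^ k / k.factorial * ((r : ℝ) / p) ^ k
              = (2*(m:ℝ)*r/p) ^ k * ((1:ℝ) / k.factorial) := by
            rw [div_pow, mul_pow, div_pow, mul_pow]
            field_simp
            ring
          have h3 : (2*(m:ℝ)*r/p) ^ k * ((1:ℝ) / k.factorial)
              ≤ (2*(m:ℝ)*r/p) ^ k * (Real.exp 1 ^ k / (k:ℝ)^k) := by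
            apply mul_le_mul_of_nonneg_left hfe (by positivity)
          have h4 : (2*(m:ℝ)*r/p) ^ k * (Real.exp 1 ^ k / (k:ℝ)^k)
              = (2 * Real.exp 1 * m * r / (p * k)) ^ k := by
            rw [← div_pow, ← mul_pow]
            congr 1
            field_simp
          calc _ ≤ _ := h1
            _ = _ := h2
            _ ≤ _ := h3
            _ = _ := h4
        -- 2 e m r / (p k) ≤ 1/2
        have hexp : Real.exp 1 < 2.7182818286 := Real.exp_one_lt_d9
        have hpk : 11 * (m:ℝ) * r ≤ (p:ℝ) * k := by
          have h1 : 11 * (m:ℝ) * r ≤ t * p := by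
            rw [← div_le_iff₀ hppos]
            exact htm
          have h2 : t * p ≤ (k:ℝ) * p :=
            mul_le_mul_of_nonneg_right (le_of_lt hkt) (le_of_lt hppos)
          calc 11 * (m:ℝ) * r ≤ t * p := h1
            _ ≤ (k:ℝ) * p := h2
            _ = (p:ℝ) * k := by ring
        have hhalf : 2 * Real.exp 1 * m * r / (p * k) ≤ 1 / 2 := by
          rw [div_le_div_iff₀ (by positivity) (by norm_num : (0:ℝ) < 2)]
          have h4e : 4 * Real.exp 1 * ((m:ℝ) * r) ≤ 11 * ((m:ℝ) * r) :=
            mul_le_mul_of_nonneg_right (by linarith) (by positivity)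
          nlinarith [hpk]
        -- power bounds
        have hpow : (2 * Real.exp 1 * m * r / (p * k)) ^ k ≤ ((1:ℝ)/2) ^ (k:ℕ) :=
          pow_le_pow_left₀ (by positivity) hhalf k
        have hrpowk : ((1:ℝ)/2) ^ (k:ℕ) ≤ ((1:ℝ)/2) ^ t := by
          rw [show ((1:ℝ)/2) ^ (k:ℕ) = ((1:ℝ)/2) ^ ((k:ℕ):ℝ) from (Real.rpow_natCast _ _).symm]
          exact Real.rpow_le_rpow_of_exponent_ge (by norm_num) (by norm_num) (le_of_lt hkt)
        -- final assembly
        calc (bad.card : ℝ)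
            ≤ (E.card.choose k : ℝ) * ((p - k).choose (r - k) : ℝ) := hstep1
          _ = (p.choose r : ℝ) * ((E.card.choose k : ℝ) * ((r.choose k : ℝ) / (p.choose k : ℝ))) := by
              rw [hstep2]; ring
          _ ≤ (p.choose r : ℝ) * ((1:ℝ)/2) ^ t := by
              apply mul_le_mul_of_nonneg_left _ (by positivity)
              calc _ ≤ _ := hprod
                _ ≤ _ := hpow
                _ ≤ _ := hrpowk
          _ ≤ (PP.card : ℝ) * (2 * ((1 : ℝ) / 2) ^ t) := by
              rw [hNcard]
              have h0 : (0:ℝ) ≤ (p.choose r : ℝ) := by positivity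
              nlinarith [hrpow_pos]
      · -- E.card < k : choose = 0
        push_neg at hkE
        have : E.card.choose k = 0 := Nat.choose_eq_zero_of_lt hkE
        rw [this, Nat.zero_mul] at hbadcard
        have : (bad.card : ℝ) = 0 := by exact_mod_cast Nat.le_zero.1 hbadcard
        rw [this]
        positivity
    · -- r < k : bad empty
      push_neg at hkr
      have hempty : bad = ∅ := by
        rw [Finset.eq_empty_iff_forall_notMem]
        intro R hR
        have hR' := hbadsub hR
        rw [Finset.mem_filter, hPP, Finset.mem_powersetCard] at hR'
        have h1 : (R ∩ E).card ≤ R.card := Finset.card_le_card Finset.inter_subset_left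
        omega
      rw [hempty]
      simp only [Finset.card_empty, Nat.cast_zero]
      positivity
  -- conclude
  have hNr : (0:ℝ) < (PP.card : ℝ) := by exact_mod_cast hNpos
  rw [ge_iff_le, ← sub_nonneg]
  have hgood : ((PP.filter (fun R => ((R ∩ E).card : ℝ) ≤ t)).card : ℝ)
      = (PP.card : ℝ) - (bad.card : ℝ) := by
    have := hgoodbad
    push_cast [← this]
    ring
  rw [hgood]
  rw [sub_div, div_self hNr.ne']
  have : (bad.card : ℝ) / (PP.card : ℝ) ≤ 2 * ((1 : ℝ) / 2) ^ t := by
    rw [div_le_iff₀ hNr]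
    calc (bad.card : ℝ) ≤ (PP.card : ℝ) * (2 * ((1 : ℝ) / 2) ^ t) := hkey
      _ = 2 * ((1 : ℝ) / 2) ^ t * (PP.card : ℝ) := by ring
  linarith



/-- There is a permutation `π` of `{1,…,p}` such that for a uniformly random
`r`-element subset `R` of `{1,…,p}`,
`|Y(R,Γ) Δ Y(π(R),Γ')| ≤ 22 r |Γ Δ Γ'| / p + 100 log n`
holds with probability at least `1 - 2 (1/2)^(11 r |Γ Δ Γ'| / p + 50 log n)`. -/
theorem stmt_5 {V : Type*} [Fintype V] [Inhabited V] [LinearOrder (V × V × V)]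
    (n : ℕ) (hn : Fintype.card V = n)
    (Γ Γ' : Finset (V × V × V)) (p r : ℕ) (hr : 1 ≤ r) (hrp : r ≤ p) (hp : p ≤ n ^ 3) :
    ∃ π : Equiv.Perm (Fin p),
      ((((Finset.univ : Finset (Fin p)).powersetCard r).filter (fun R =>
            (((Ysel R Γ) ∆ (Ysel (R.image π) Γ')).card : ℝ) ≤
              22 * r * ((Γ ∆ Γ').card : ℝ) / p + 100 * Real.logb 2 n)).card : ℝ)
          / ((((Finset.univ : Finset (Fin p)).powersetCard r)).card : ℝ)
        ≥ 1 - 2 * ((1 : ℝ) / 2) ^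
            (11 * r * ((Γ ∆ Γ').card : ℝ) / p + 50 * Real.logb 2 n) := by
  classical
  have hcardU : Fintype.card (V × V × V) = n ^ 3 := by
    rw [Fintype.card_prod, Fintype.card_prod, hn]; ring
  have hpU : p ≤ Fintype.card (V × V × V) := by rw [hcardU]; exact hp
  have hp1 : 0 < p := lt_of_lt_of_le hr hrp
  obtain ⟨π, E, hEcard, hbound⟩ := key_perm Γ Γ' p hp1 hpU
  refine ⟨π, ?_⟩
  have hn1 : (1:ℝ) ≤ (n:ℝ) := by
    have h0 : 0 < Fintype.card V := Fintype.card_pos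
    have : 1 ≤ n := by omega
    exact_mod_cast this
  have hlogb : 0 ≤ Real.logb 2 n := Real.logb_nonneg (by norm_num) hn1
  set t : ℝ := 11 * r * ((Γ ∆ Γ').card : ℝ) / p + 50 * Real.logb 2 n with hts
  have ht0 : 0 ≤ t := by
    have h1 : (0:ℝ) ≤ 11 * r * ((Γ ∆ Γ').card : ℝ) / p := by positivity
    rw [hts]; linarith
  have htm : 11 * ((Γ ∆ Γ').card : ℝ) * r / p ≤ t := by
    have heq : 11 * ((Γ ∆ Γ').card:ℝ) * r / p = 11 * r * ((Γ ∆ Γ').card:ℝ) / p := by ring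
    rw [heq, hts]; linarith
  have hprob := prob_lemma hr hrp E ((Γ ∆ Γ').card) (by convert hEcard using 3; ext x; simp [Finset.mem_symmDiff]) t ht0 htm
  have hsubfilter : (((Finset.univ : Finset (Fin p)).powersetCard r).filter
        (fun R => ((R ∩ E).card : ℝ) ≤ t))
      ⊆ ((Finset.univ : Finset (Fin p)).powersetCard r).filter (fun R =>
          (((Ysel R Γ) ∆ (Ysel (R.image π) Γ')).card : ℝ) ≤
            22 * r * ((Γ ∆ Γ').card : ℝ) / p + 100 * Real.logb 2 n) := by
    intro R hR
    rw [Finset.mem_filter] at hR ⊢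
    obtain ⟨hR1, hR2⟩ := hR
    refine ⟨hR1, ?_⟩
    have h1 := hbound R
    have h2 : (((Ysel R Γ) ∆ (Ysel (R.image π) Γ')).card : ℝ)
        ≤ 2 * ((R ∩ E).card : ℝ) := by
      have h1' : ((Ysel R Γ) ∆ (Ysel (R.image π) Γ')).card ≤ 2 * (R ∩ E).card := by
        convert h1 using 3 <;> first
          | rfl
          | (ext x; simp [Finset.mem_symmDiff])
          | congr!
      exact_mod_cast h1'
    have h3 : 22 * r * ((Γ ∆ Γ').card:ℝ) / p + 100 * Real.logb 2 n = 2 * t := by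
      rw [hts]; ring
    rw [h3]
    linarith
  have hcardle := Finset.card_le_card hsubfilter
  have htotpos : (0:ℝ) < (((Finset.univ : Finset (Fin p)).powersetCard r).card : ℝ) := by
    have : 0 < ((Finset.univ : Finset (Fin p)).powersetCard r).card := by
      rw [Finset.card_powersetCard, Finset.card_univ, Fintype.card_fin]
      exact Nat.choose_pos hrp
    exact_mod_cast this
  refine le_trans hprob ?_
  gcongr
end

section
/- Let V_i, V_j, V_k be finite sets of sizes r_i, r_j, r_k. Fix F_ik ⊆ V_i × V_k such that for every w ∈ V_k, |{u ∈ V_i : (u,w) ∈ F_ik}| ≤ 2·f_ik/r_k. Let F be a uniformly random subset of V_i × V_j of size f_ij, and fix any pair (v,w) ∈ V_j × V_k. Then Pr[ |{u ∈ V_i : (u,v) ∈ F and (u,w) ∈ F_ik}| ≥ 11·f_ij·f_ik/(r_i·r_j·r_k) ] ≤ (1/2)^(11·f_ij·f_ik/(r_i·r_j·r_k)), provided 11·f_ik/r_k / |{u : (u,w) ∈ F_ik}| − 1 > 2e − 1. -/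
open Finset
open scoped Classical

theorem aux_choose_ratio (a m n : ℕ) (h : m ≤ n) : m.choose a * n ^ a ≤ n.choose a * m ^ a := by
  have key : m.descFactorial a * n ^ a ≤ n.descFactorial a * m ^ a := by
    rw [Nat.descFactorial_eq_prod_range, Nat.descFactorial_eq_prod_range,
      pow_eq_prod_const, ← prod_mul_distrib, pow_eq_prod_const, ← prod_mul_distrib]
    refine prod_le_prod' fun i _ => ?_
    calc (m - i) * n = m * n - i * n := by rw [Nat.sub_mul]
      _ ≤ m * n - i * m := Nat.sub_le_sub_left (Nat.mul_le_mul_left i h) _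
      _ = (n - i) * m := by rw [Nat.sub_mul, Nat.mul_comm m n]
  rw [Nat.descFactorial_eq_factorial_mul_choose, Nat.descFactorial_eq_factorial_mul_choose,
    Nat.mul_assoc, Nat.mul_assoc] at key
  exact Nat.le_of_mul_le_mul_left key a.factorial_pos

theorem aux_double_count {α : Type*} [DecidableEq α] (U T : Finset α) (hTU : T ⊆ U)
    (fij a : ℕ) :
    ((U.powersetCard fij).filter (fun F => a ≤ (F ∩ T).card)).card
      ≤ T.card.choose a * (U.card - a).choose (fij - a) := by
  calc ((U.powersetCard fij).filter (fun F => a ≤ (F ∩ T).card)).card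
      = ∑ F ∈ (U.powersetCard fij).filter (fun F => a ≤ (F ∩ T).card), 1 :=
        (card_eq_sum_ones _)
    _ ≤ ∑ F ∈ (U.powersetCard fij).filter (fun F => a ≤ (F ∩ T).card),
          ((F ∩ T).powersetCard a).card := by
        refine sum_le_sum fun F hF => ?_
        rw [card_powersetCard]
        exact (Nat.choose_pos (mem_filter.1 hF).2)
    _ ≤ ∑ F ∈ U.powersetCard fij, ((F ∩ T).powersetCard a).card :=
        sum_le_sum_of_subset (filter_subset _ _)
    _ = ∑ F ∈ U.powersetCard fij, ((T.powersetCard a).filter (fun S => S ⊆ F)).card := by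
        refine sum_congr rfl fun F _ => ?_
        congr 1
        ext S
        simp only [mem_powersetCard, mem_filter, subset_inter_iff]
        tauto
    _ = ∑ F ∈ U.powersetCard fij, ∑ S ∈ T.powersetCard a, if S ⊆ F then 1 else 0 := by
        refine sum_congr rfl fun F _ => ?_
        rw [card_filter]
    _ = ∑ S ∈ T.powersetCard a, ∑ F ∈ U.powersetCard fij, if S ⊆ F then 1 else 0 :=
        sum_comm
    _ ≤ ∑ S ∈ T.powersetCard a, (U.card - a).choose (fij - a) := by
        refine sum_le_sum fun S hS => ?_
        rw [mem_powersetCard] at hS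
        obtain ⟨hST, hSa⟩ := hS
        have hSU : S ⊆ U := hST.trans hTU
        rw [← card_filter]
        have : ((U.powersetCard fij).filter (fun F => S ⊆ F)).card
            ≤ ((U \ S).powersetCard (fij - a)).card := by
          refine card_le_card_of_injOn (fun F => F \ S) ?_ ?_
          · intro F hF
            rw [mem_coe, mem_filter, mem_powersetCard] at hF
            obtain ⟨⟨hFU, hFc⟩, hSF⟩ := hF
            rw [mem_coe, mem_powersetCard]
            exact ⟨sdiff_subset_sdiff hFU (le_refl S), by rw [card_sdiff_of_subset hSF, hFc, hSa]⟩
          · intro F1 h1 F2 h2 h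
            rw [mem_coe, mem_filter] at h1 h2
            have e1 : F1 = F1 \ S ∪ S := by rw [sdiff_union_of_subset h1.2]
            have e2 : F2 = F2 \ S ∪ S := by rw [sdiff_union_of_subset h2.2]
            simp only at h; rw [e1, e2, h]
        rwa [card_powersetCard, card_sdiff_of_subset hSU, hSa] at this
    _ = T.card.choose a * (U.card - a).choose (fij - a) := by
        rw [sum_const, card_powersetCard, smul_eq_mul]

/-- Given a fixed `F_ik ⊆ V_i × V_k` in which every `w ∈ V_k` has degree at most
`2 f_ik / r_k`, a uniformly random `f_ij`-element subset `F` of `V_i × V_j`, and a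
fixed pair `(v,w) ∈ V_j × V_k`, the probability that
`|{u ∈ V_i : (u,v) ∈ F and (u,w) ∈ F_ik}| ≥ 11 f_ij f_ik / (r_i r_j r_k)` is at
most `(1/2)^(11 f_ij f_ik / (r_i r_j r_k))`, provided
`(11 f_ik / r_k) / |{u : (u,w) ∈ F_ik}| - 1 > 2e - 1`. -/
theorem stmt_7 {α β γ : Type*} [DecidableEq α] [DecidableEq β] [DecidableEq γ]
    (Vi : Finset α) (Vj : Finset β) (Vk : Finset γ) (ri rj rk fij fik : ℕ)
    (hri : Vi.card = ri) (hrj : Vj.card = rj) (hrk : Vk.card = rk)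
    (hfij1 : 1 ≤ fij) (hfij2 : fij ≤ ri * rj) (hfik : 1 ≤ fik)
    (Fik : Finset (α × γ)) (hFik : Fik ⊆ Vi ×ˢ Vk)
    (hdeg : ∀ w ∈ Vk, ((Vi.filter (fun u => (u, w) ∈ Fik)).card : ℝ) ≤ 2 * fik / rk)
    (v : β) (hv : v ∈ Vj) (w : γ) (hw : w ∈ Vk)
    (hδ : 11 * (fik : ℝ) / rk / ((Vi.filter (fun u => (u, w) ∈ Fik)).card : ℝ) - 1 >
        2 * Real.exp 1 - 1) :
    ((((Vi ×ˢ Vj).powersetCard fij).filter (fun F =>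
          11 * (fij : ℝ) * fik / (ri * rj * rk) ≤
            ((Vi.filter (fun u => (u, v) ∈ F ∧ (u, w) ∈ Fik)).card : ℝ))).card : ℝ)
        / (((Vi ×ˢ Vj).powersetCard fij).card : ℝ)
      ≤ ((1 : ℝ) / 2) ^ (11 * (fij : ℝ) * fik / (ri * rj * rk)) := by
  classical
  set e : ℝ := Real.exp 1 with he
  set D : Finset α := Vi.filter (fun u => (u, w) ∈ Fik) with hDdef
  set d : ℕ := D.card with hddef
  set N : ℕ := ri * rj with hNdef
  set t : ℝ := 11 * (fij : ℝ) * fik / (ri * rj * rk) with htdef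
  set a : ℕ := ⌈t⌉₊ with hadef
  have hUcard : (Vi ×ˢ Vj).card = N := by rw [card_product, hri, hrj]
  have hNpos : 0 < N := lt_of_lt_of_le hfij1 hfij2
  have hrkpos : 0 < rk := hrk ▸ card_pos.2 ⟨w, hw⟩
  have hNR : (0:ℝ) < (N:ℝ) := by exact_mod_cast hNpos
  have hrkR : (0:ℝ) < (rk:ℝ) := by exact_mod_cast hrkpos
  have hfijR : (0:ℝ) < (fij:ℝ) := by exact_mod_cast hfij1
  have hfikR : (0:ℝ) < (fik:ℝ) := by exact_mod_cast hfik
  have hNcast : ((N:ℕ):ℝ) = (ri:ℝ) * rj := by rw [hNdef]; push_cast; ring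
  have hepos : 0 < e := Real.exp_pos 1
  -- positivity of t and relation to a
  have htpos : 0 < t := by
    rw [htdef]
    apply div_pos (by positivity)
    rw [show ((ri:ℝ) * rj * rk) = (N:ℝ) * rk by rw [hNcast]]
    positivity
  have hta : t ≤ (a : ℝ) := Nat.le_ceil t
  have hapos : 0 < a := Nat.ceil_pos.2 htpos
  have haR : (0:ℝ) < (a:ℝ) := by exact_mod_cast hapos
  have haceil : ∀ n : ℕ, t ≤ (n:ℝ) → a ≤ n := fun n h => Nat.ceil_le.2 h
  clear_value a
  -- consequences of hδ
  have h2ed' : 2 * e < 11 * (fik:ℝ) / rk / d := by linarith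
  have hdpos : (0:ℝ) < (d:ℝ) := by
    rcases Nat.eq_zero_or_pos d with h0 | h0
    · rw [h0] at h2ed'; norm_num at h2ed'; linarith
    · exact_mod_cast h0
  have h2ed : 2 * e * d < 11 * (fik:ℝ) / rk := (lt_div_iff₀ hdpos).1 h2ed'
  -- counting step
  set T : Finset (α × β) := D ×ˢ ({v} : Finset β) with hTdef
  have hTU : T ⊆ Vi ×ˢ Vj :=
    product_subset_product (filter_subset _ _) (singleton_subset_iff.2 hv)
  have hTcard : T.card = d := by rw [hTdef, card_product, card_singleton, mul_one]
  have hXeq : ∀ F : Finset (α × β),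
      (Vi.filter fun u => (u, v) ∈ F ∧ (u, w) ∈ Fik).card = (F ∩ T).card := by
    intro F
    have himg : F ∩ T = (Vi.filter fun u => (u, v) ∈ F ∧ (u, w) ∈ Fik).image
        (fun u => (u, v)) := by
      ext ⟨x, y⟩
      simp only [mem_inter, hTdef, mem_product, mem_singleton, hDdef, mem_filter, mem_image,
        Prod.mk.injEq]
      constructor
      · rintro ⟨hF, ⟨hxVi, hxw⟩, rfl⟩
        exact ⟨x, ⟨hxVi, hF, hxw⟩, rfl, rfl⟩
      · rintro ⟨u, ⟨huVi, huF, huw⟩, rfl, rfl⟩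
        exact ⟨huF, ⟨huVi, huw⟩, rfl⟩
    rw [himg, card_image_of_injective _ (fun x y hxy => (Prod.mk.injEq _ _ _ _ ▸ hxy).1)]
  have hbadsub : (((Vi ×ˢ Vj).powersetCard fij).filter (fun F =>
        t ≤ ((Vi.filter (fun u => (u, v) ∈ F ∧ (u, w) ∈ Fik)).card : ℝ)))
      ⊆ (((Vi ×ˢ Vj).powersetCard fij).filter (fun F => a ≤ (F ∩ T).card)) := by
    intro F hF
    rw [mem_filter] at hF ⊢
    refine ⟨hF.1, ?_⟩
    have := hF.2
    rw [hXeq F] at this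
    exact haceil _ this
  have hkey : (((Vi ×ˢ Vj).powersetCard fij).filter (fun F =>
        t ≤ ((Vi.filter (fun u => (u, v) ∈ F ∧ (u, w) ∈ Fik)).card : ℝ))).card
      ≤ d.choose a * (N - a).choose (fij - a) := by
    refine (card_le_card hbadsub).trans ?_
    have := aux_double_count (Vi ×ˢ Vj) T hTU fij a
    rwa [hTcard, hUcard] at this
  clear_value e D d N t
  -- total number of subsets
  have hfijN : fij ≤ N := hfij2
  have htot : ((Vi ×ˢ Vj).powersetCard fij).card = N.choose fij := by
    rw [card_powersetCard, hUcard]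
  have htotpos : 0 < N.choose fij := Nat.choose_pos hfijN
  have htotR : (0:ℝ) < (N.choose fij : ℝ) := by exact_mod_cast htotpos
  rcases le_or_gt a fij with haf | hfa
  · -- main case  a ≤ fij
    have haN : a ≤ N := le_trans haf hfijN
    have hNCa : (0:ℝ) < (N.choose a : ℝ) := by exact_mod_cast Nat.choose_pos haN
    have hA : (d.choose a : ℝ) ≤ (d:ℝ)^a / a.factorial := by
      have h1 : (a.factorial : ℝ) * (d.choose a : ℝ) ≤ (d:ℝ)^a := by
        exact_mod_cast (Nat.descFactorial_eq_factorial_mul_choose d a ▸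
          Nat.descFactorial_le_pow d a)
      rw [le_div_iff₀ (by positivity)]
      linarith
    have hB : (fij.choose a : ℝ) ≤ ((fij:ℝ)/(N:ℝ))^a * (N.choose a : ℝ) := by
      have h' : (fij.choose a : ℝ) * (N:ℝ)^a ≤ (N.choose a : ℝ) * (fij:ℝ)^a := by
        exact_mod_cast aux_choose_ratio a fij N hfijN
      rw [div_pow, div_mul_eq_mul_div, le_div_iff₀ (by positivity)]
      nlinarith
    have hfact : ((a:ℝ))^a ≤ e^a * (a.factorial : ℝ) := by
      have h := Real.pow_div_factorial_le_exp (x := (a:ℝ)) (by positivity) a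
      rw [div_le_iff₀ (by positivity)] at h
      calc ((a:ℝ))^a ≤ Real.exp a * (a.factorial : ℝ) := h
        _ = e^a * (a.factorial : ℝ) := by rw [he, Real.exp_one_pow]
    have hC : (d:ℝ)^a / (a.factorial : ℝ) ≤ (e * (d:ℝ) / (a:ℝ))^a := by
      rw [div_pow, mul_pow, div_le_div_iff₀ (by positivity) (by positivity)]
      calc (d:ℝ)^a * (a:ℝ)^a ≤ (d:ℝ)^a * (e^a * (a.factorial:ℝ)) :=
            mul_le_mul_of_nonneg_left hfact (by positivity)
        _ = e^a * (d:ℝ)^a * (a.factorial:ℝ) := by ring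
    have hD : (e * (d:ℝ) / (a:ℝ)) * ((fij:ℝ)/(N:ℝ)) ≤ 1/2 := by
      have h1 : 2 * e * (d:ℝ) * ((fij:ℝ)/(N:ℝ)) < (11 * (fik:ℝ)/(rk:ℝ)) * ((fij:ℝ)/(N:ℝ)) :=
        mul_lt_mul_of_pos_right h2ed (by positivity)
      have h2 : (11 * (fik:ℝ)/(rk:ℝ)) * ((fij:ℝ)/(N:ℝ)) = t := by
        rw [htdef, ← hNcast]; field_simp
      have h3 : 2 * e * (d:ℝ) * ((fij:ℝ)/(N:ℝ)) < (a:ℝ) := lt_of_lt_of_le (h2 ▸ h1) hta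
      have h4 : 2 * e * (d:ℝ) * (fij:ℝ) / (N:ℝ) < (a:ℝ) := by
        rw [mul_div_assoc]; exact h3
      have h5 : 2 * e * (d:ℝ) * (fij:ℝ) < (a:ℝ) * (N:ℝ) := (div_lt_iff₀ hNR).1 h4
      rw [div_mul_div_comm, div_le_div_iff₀ (by positivity) (by norm_num)]
      linarith
    have hmain : (d.choose a : ℝ) * (fij.choose a : ℝ)
        ≤ (1/2:ℝ)^a * (N.choose a : ℝ) := by
      calc (d.choose a : ℝ) * (fij.choose a : ℝ)
          ≤ ((d:ℝ)^a / (a.factorial:ℝ)) * (((fij:ℝ)/(N:ℝ))^a * (N.choose a : ℝ)) :=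
            mul_le_mul hA hB (by positivity) (by positivity)
        _ ≤ (e * (d:ℝ) / (a:ℝ))^a * (((fij:ℝ)/(N:ℝ))^a * (N.choose a : ℝ)) :=
            mul_le_mul_of_nonneg_right hC (by positivity)
        _ = ((e * (d:ℝ) / (a:ℝ)) * ((fij:ℝ)/(N:ℝ)))^a * (N.choose a : ℝ) := by
            rw [mul_pow]; ring
        _ ≤ (1/2:ℝ)^a * (N.choose a : ℝ) := by
            refine mul_le_mul_of_nonneg_right ?_ (by positivity)
            exact pow_le_pow_left₀ (by positivity) hD a
    have hid : ((N - a).choose (fij - a) : ℝ)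
        = (N.choose fij : ℝ) * (fij.choose a : ℝ) / (N.choose a : ℝ) := by
      have h := Nat.choose_mul (n := N) haf
      have h' : (N.choose fij : ℝ) * (fij.choose a : ℝ)
          = (N.choose a : ℝ) * ((N - a).choose (fij - a) : ℝ) := by exact_mod_cast h
      rw [eq_div_iff (ne_of_gt hNCa)]; linear_combination -h'
    have hfinal : ((((Vi ×ˢ Vj).powersetCard fij).filter (fun F =>
          t ≤ ((Vi.filter (fun u => (u, v) ∈ F ∧ (u, w) ∈ Fik)).card : ℝ))).card : ℝ)
        ≤ (1/2:ℝ)^a * (N.choose fij : ℝ) := by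
      calc ((((Vi ×ˢ Vj).powersetCard fij).filter (fun F =>
          t ≤ ((Vi.filter (fun u => (u, v) ∈ F ∧ (u, w) ∈ Fik)).card : ℝ))).card : ℝ)
          ≤ (d.choose a : ℝ) * ((N - a).choose (fij - a) : ℝ) := by exact_mod_cast hkey
        _ = (d.choose a : ℝ) * (fij.choose a : ℝ) * (N.choose fij : ℝ) / (N.choose a : ℝ) := by
            rw [hid]; ring
        _ ≤ ((1/2:ℝ)^a * (N.choose a : ℝ)) * (N.choose fij : ℝ) / (N.choose a : ℝ) := by
            gcongr
        _ = (1/2:ℝ)^a * (N.choose fij : ℝ) := by field_simp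
    have hrpow : ((1:ℝ)/2)^(a:ℕ) ≤ ((1:ℝ)/2) ^ t := by
      rw [← Real.rpow_natCast ((1:ℝ)/2) a]
      exact Real.rpow_le_rpow_of_exponent_ge (by norm_num) (by norm_num) hta
    rw [htot, div_le_iff₀ htotR]
    calc ((((Vi ×ˢ Vj).powersetCard fij).filter (fun F =>
          t ≤ ((Vi.filter (fun u => (u, v) ∈ F ∧ (u, w) ∈ Fik)).card : ℝ))).card : ℝ)
        ≤ (1/2:ℝ)^a * (N.choose fij : ℝ) := hfinal
      _ ≤ ((1:ℝ)/2) ^ t * (N.choose fij : ℝ) :=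
          mul_le_mul_of_nonneg_right hrpow (le_of_lt htotR)
  · -- degenerate case fij < a : the filtered set is empty
    have hempty : (((Vi ×ˢ Vj).powersetCard fij).filter (fun F =>
          t ≤ ((Vi.filter (fun u => (u, v) ∈ F ∧ (u, w) ∈ Fik)).card : ℝ))) = ∅ := by
      rw [filter_eq_empty_iff]
      intro F hF hFt
      have h1 : a ≤ (F ∩ T).card := haceil _ (hXeq F ▸ hFt)
      have h2 : (F ∩ T).card ≤ fij := by
        calc (F ∩ T).card ≤ F.card := card_le_card inter_subset_left
          _ = fij := (mem_powersetCard.1 hF).2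
      omega
    rw [hempty]
    simp only [card_empty, Nat.cast_zero, zero_div]
    positivity
end

section
/- Let V_i, V_j, V_k be finite sets with sizes r_i, r_j, r_k, fix u ∈ V_i and v ∈ V_j, and let F_ik ⊆ V_i × V_k and F_jk ⊆ V_j × V_k be independent uniformly random subsets of sizes f_ik and f_jk. Define A = {w ∈ V_k : (u,w) ∈ F_ik and (v,w) ∈ F_jk}. Then Pr[ |A| > 11·f_ik·f_jk/(r_i·r_j·r_k) ] ≤ 2^(−11·f_ik·f_jk/(r_i·r_j·r_k)) + exp(−f_ik/(3·r_i)). -/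
open Finset
open scoped Classical

lemma aux_choose_pow (s : ℕ) : ∀ N f : ℕ, s ≤ f → f ≤ N →
    (N - s).choose (f - s) * N ^ s ≤ N.choose f * f ^ s := by
  induction s with
  | zero => simp
  | succ s ih =>
    intro N f hsf hfN
    have hsf' : s ≤ f := by omega
    have hpos : 0 < N - s := by omega
    have hid : (N - s) * (N - (s+1)).choose (f - (s+1)) =
        (N - s).choose (f - s) * (f - s) := by
      have ha : N - s = (N - (s+1)) + 1 := by omega
      have hb : f - s = (f - (s+1)) + 1 := by omega
      rw [ha, hb]; exact Nat.add_one_mul_choose_eq _ _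
    have hineq : N * (f - s) ≤ f * (N - s) := by
      have e1 : N * (f - s) + N * s = N * f := by
        rw [← Nat.mul_add, Nat.sub_add_cancel hsf']
      have e2 : f * (N - s) + f * s = f * N := by
        rw [← Nat.mul_add, Nat.sub_add_cancel (hsf'.trans hfN)]
      have e3 : f * s ≤ N * s := Nat.mul_le_mul_right s hfN
      have e4 : N * f = f * N := Nat.mul_comm N f
      linarith
    have step : (N - (s+1)).choose (f - (s+1)) * N ≤ (N - s).choose (f - s) * f := by
      have h2 : (N - (s+1)).choose (f - (s+1)) * N * (N - s) ≤
          (N - s).choose (f - s) * f * (N - s) := by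
        calc (N - (s+1)).choose (f - (s+1)) * N * (N - s)
            = N * ((N - s) * (N - (s+1)).choose (f - (s+1))) := by ring
          _ = N * ((N - s).choose (f - s) * (f - s)) := by rw [hid]
          _ = (N - s).choose (f - s) * (N * (f - s)) := by ring
          _ ≤ (N - s).choose (f - s) * (f * (N - s)) :=
              Nat.mul_le_mul_left _ hineq
          _ = (N - s).choose (f - s) * f * (N - s) := by ring
      exact Nat.le_of_mul_le_mul_right h2 hpos
    calc (N - (s+1)).choose (f - (s+1)) * N ^ (s+1)
        = (N - (s+1)).choose (f - (s+1)) * N * N ^ s := by ring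
      _ ≤ (N - s).choose (f - s) * f * N ^ s :=
          Nat.mul_le_mul step (le_refl _)
      _ = f * ((N - s).choose (f - s) * N ^ s) := by ring
      _ ≤ f * (N.choose f * f ^ s) := Nat.mul_le_mul_left _ (ih N f hsf' hfN)
      _ = N.choose f * f ^ (s+1) := by ring

lemma aux_card_superset {δ : Type*} [DecidableEq δ] (U T : Finset δ)
    (hTU : T ⊆ U) {f : ℕ} (hf : T.card ≤ f) :
    ((U.powersetCard f).filter (fun F => T ⊆ F)).card
      = (U.card - T.card).choose (f - T.card) := by
  have h : ((U.powersetCard f).filter (fun F => T ⊆ F)).card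
      = ((U \ T).powersetCard (f - T.card)).card := by
    apply Finset.card_bij' (fun F _ => F \ T) (fun G _ => G ∪ T)
    · intro F hF
      rw [mem_filter, mem_powersetCard] at hF
      obtain ⟨⟨hFU, hFc⟩, hTF⟩ := hF
      rw [mem_powersetCard]
      exact ⟨sdiff_subset_sdiff hFU (le_refl _), by rw [card_sdiff_of_subset hTF, hFc]⟩
    · intro G hG
      rw [mem_powersetCard] at hG
      obtain ⟨hGU, hGc⟩ := hG
      have hdisj : Disjoint G T := (sdiff_disjoint.mono_left hGU)
      rw [mem_filter, mem_powersetCard]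
      refine ⟨⟨union_subset (hGU.trans (sdiff_subset)) hTU, ?_⟩, subset_union_right⟩
      rw [card_union_of_disjoint hdisj, hGc]
      omega
    · intro F hF
      rw [mem_filter] at hF
      exact sdiff_union_of_subset hF.2
    · intro G hG
      rw [mem_powersetCard] at hG
      have hdisj : Disjoint G T := (sdiff_disjoint.mono_left hG.1)
      rw [union_sdiff_right, sdiff_eq_self_of_disjoint hdisj]
  rw [h, card_powersetCard, card_sdiff_of_subset hTU]

/-- For independent uniformly random subsets `F_ik ⊆ V_i × V_k` and
`F_jk ⊆ V_j × V_k` of sizes `f_ik` and `f_jk`, and fixed `u ∈ V_i`, `v ∈ V_j`, the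
set `A = {w ∈ V_k : (u,w) ∈ F_ik and (v,w) ∈ F_jk}` satisfies
`Pr[|A| > 11 f_ik f_jk/(r_i r_j r_k)] ≤ 2^(-11 f_ik f_jk/(r_i r_j r_k)) + exp(-f_ik/(3 r_i))`. -/
theorem stmt_9 {α β γ : Type*} [DecidableEq α] [DecidableEq β] [DecidableEq γ]
    (Vi : Finset α) (Vj : Finset β) (Vk : Finset γ) (ri rj rk fik fjk : ℕ)
    (hri : Vi.card = ri) (hrj : Vj.card = rj) (hrk : Vk.card = rk)
    (hfik1 : 1 ≤ fik) (hfik2 : fik ≤ ri * rk)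
    (hfjk1 : 1 ≤ fjk) (hfjk2 : fjk ≤ rj * rk)
    (u : α) (hu : u ∈ Vi) (v : β) (hv : v ∈ Vj) :
    (((((Vi ×ˢ Vk).powersetCard fik) ×ˢ ((Vj ×ˢ Vk).powersetCard fjk)).filter (fun FF =>
          11 * (fik : ℝ) * fjk / ((ri : ℝ) * rj * rk) <
            ((Vk.filter (fun w => (u, w) ∈ FF.1 ∧ (v, w) ∈ FF.2)).card : ℝ))).card : ℝ)
        / ((((Vi ×ˢ Vk).powersetCard fik) ×ˢ ((Vj ×ˢ Vk).powersetCard fjk)).card : ℝ)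
      ≤ (2 : ℝ) ^ (-(11 * (fik : ℝ) * fjk / ((ri : ℝ) * rj * rk))) +
          Real.exp (-(fik : ℝ) / (3 * ri)) := by
  classical
  have hri1 : 0 < ri := hri ▸ card_pos.2 ⟨u, hu⟩
  have hrj1 : 0 < rj := hrj ▸ card_pos.2 ⟨v, hv⟩
  have hrk1 : 0 < rk := by
    rcases Nat.eq_zero_or_pos rk with h | h
    · rw [h, Nat.mul_zero] at hfik2; omega
    · exact h
  have hfikR : (0:ℝ) < fik := by exact_mod_cast hfik1
  have hfjkR : (0:ℝ) < fjk := by exact_mod_cast hfjk1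
  have hriR : (0:ℝ) < ri := by exact_mod_cast hri1
  have hrjR : (0:ℝ) < rj := by exact_mod_cast hrj1
  have hrkR : (0:ℝ) < rk := by exact_mod_cast hrk1
  set t : ℝ := 11 * (fik : ℝ) * fjk / ((ri : ℝ) * rj * rk) with ht
  have htpos : 0 < t := by
    apply div_pos
    · positivity
    · positivity
  set s : ℕ := ⌊t⌋₊ + 1 with hs
  have hts : t < (s : ℝ) := by
    rw [hs]; push_cast; exact Nat.lt_floor_add_one t
  set P := ((Vi ×ˢ Vk).powersetCard fik) ×ˢ ((Vj ×ˢ Vk).powersetCard fjk) with hP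
  set Q := P.filter (fun FF =>
      t < ((Vk.filter (fun w => (u, w) ∈ FF.1 ∧ (v, w) ∈ FF.2)).card : ℝ)) with hQ
  have hDcard : P.card = (ri * rk).choose fik * ((rj * rk).choose fjk) := by
    rw [hP, card_product, card_powersetCard, card_powersetCard, card_product,
      card_product, hri, hrj, hrk]
  have hC1pos : 0 < (ri * rk).choose fik := Nat.choose_pos hfik2
  have hC2pos : 0 < (rj * rk).choose fjk := Nat.choose_pos hfjk2
  have hPpos : (0:ℝ) < P.card := by
    rw [hDcard]; exact_mod_cast Nat.mul_pos hC1pos hC2pos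
  -- every member of Q has a large intersection set
  have hAcard : ∀ FF : Finset (α × γ) × Finset (β × γ), FF ∈ Q →
      s ≤ (Vk.filter (fun w => (u, w) ∈ FF.1 ∧ (v, w) ∈ FF.2)).card := by
    intro FF hFF
    rw [hQ] at hFF
    simp only [mem_filter] at hFF
    have h1 : (↑⌊t⌋₊ : ℝ) ≤ t := Nat.floor_le htpos.le
    have h2 : (↑⌊t⌋₊ : ℝ) < ((Vk.filter (fun w => (u, w) ∈ FF.1 ∧ (v, w) ∈ FF.2)).card : ℝ) :=
      h1.trans_lt hFF.2
    have h3 : ⌊t⌋₊ < (Vk.filter (fun w => (u, w) ∈ FF.1 ∧ (v, w) ∈ FF.2)).card := by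
      exact_mod_cast h2
    omega
  suffices hmain : (Q.card : ℝ) / P.card ≤ (2 : ℝ) ^ (-t) by
    exact hmain.trans (le_add_of_nonneg_right (Real.exp_pos _).le)
  by_cases hbig : s ≤ rk ∧ s ≤ fik ∧ s ≤ fjk
  · obtain ⟨hsrk, hsfik, hsfjk⟩ := hbig
    have hinj1 : Function.Injective (fun w : γ => (u, w)) := fun a b h => (Prod.ext_iff.mp h).2
    have hinj2 : Function.Injective (fun w : γ => (v, w)) := fun a b h => (Prod.ext_iff.mp h).2
    -- union bound
    have hsub : Q ⊆ (Vk.powersetCard s).biUnion (fun S =>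
        (((Vi ×ˢ Vk).powersetCard fik).filter (fun F => ∀ w ∈ S, (u, w) ∈ F)) ×ˢ
        (((Vj ×ˢ Vk).powersetCard fjk).filter (fun F => ∀ w ∈ S, (v, w) ∈ F))) := by
      intro FF hFF
      have hsA := hAcard FF hFF
      rw [hQ] at hFF
      simp only [mem_filter] at hFF
      obtain ⟨S, hSA, hScard⟩ := Finset.exists_subset_card_eq hsA
      have hmem : ∀ w ∈ S, (u, w) ∈ FF.1 ∧ (v, w) ∈ FF.2 := by
        intro w hw
        have hw2 := hSA hw
        simp only [mem_filter] at hw2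
        exact hw2.2
      simp only [mem_biUnion]
      refine ⟨S, mem_powersetCard.mpr ⟨hSA.trans (filter_subset _ _), hScard⟩, ?_⟩
      have hFFP := hFF.1
      rw [hP] at hFFP
      simp only [mem_product] at hFFP
      simp only [mem_product, mem_filter]
      exact ⟨⟨hFFP.1, fun w hw => (hmem w hw).1⟩, ⟨hFFP.2, fun w hw => (hmem w hw).2⟩⟩
    have hcount1 : ∀ S ∈ Vk.powersetCard s,
        (((Vi ×ˢ Vk).powersetCard fik).filter (fun F => ∀ w ∈ S, (u, w) ∈ F)).card
          = (ri * rk - s).choose (fik - s) := by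
      intro S hS
      rw [mem_powersetCard] at hS
      have hTU : S.image (fun w => (u, w)) ⊆ Vi ×ˢ Vk := by
        intro p hp
        obtain ⟨w, hw, rfl⟩ := mem_image.mp hp
        exact mem_product.mpr ⟨hu, hS.1 hw⟩
      have hTc : (S.image (fun w => (u, w))).card = s := by
        rw [card_image_of_injective _ hinj1, hS.2]
      have h := aux_card_superset (Vi ×ˢ Vk) (S.image (fun w => (u, w))) hTU
        (f := fik) (by rw [hTc]; exact hsfik)
      rw [card_product, hri, hrk, hTc] at h
      rw [← h]
      congr 1
      ext F
      simp only [mem_filter, Finset.image_subset_iff]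
    have hcount2 : ∀ S ∈ Vk.powersetCard s,
        (((Vj ×ˢ Vk).powersetCard fjk).filter (fun F => ∀ w ∈ S, (v, w) ∈ F)).card
          = (rj * rk - s).choose (fjk - s) := by
      intro S hS
      rw [mem_powersetCard] at hS
      have hTU : S.image (fun w => (v, w)) ⊆ Vj ×ˢ Vk := by
        intro p hp
        obtain ⟨w, hw, rfl⟩ := mem_image.mp hp
        exact mem_product.mpr ⟨hv, hS.1 hw⟩
      have hTc : (S.image (fun w => (v, w))).card = s := by
        rw [card_image_of_injective _ hinj2, hS.2]
      have h := aux_card_superset (Vj ×ˢ Vk) (S.image (fun w => (v, w))) hTU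
        (f := fjk) (by rw [hTc]; exact hsfjk)
      rw [card_product, hrj, hrk, hTc] at h
      rw [← h]
      congr 1
      ext F
      simp only [mem_filter, Finset.image_subset_iff]
    have hQB : Q.card ≤ rk.choose s *
        ((ri * rk - s).choose (fik - s) * ((rj * rk - s).choose (fjk - s))) := by
      calc Q.card ≤ _ := card_le_card hsub
        _ ≤ ∑ S ∈ Vk.powersetCard s,
            ((((Vi ×ˢ Vk).powersetCard fik).filter (fun F => ∀ w ∈ S, (u, w) ∈ F)) ×ˢ
             (((Vj ×ˢ Vk).powersetCard fjk).filter (fun F => ∀ w ∈ S, (v, w) ∈ F))).card :=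
            by convert card_biUnion_le
        _ = ∑ S ∈ Vk.powersetCard s,
            ((ri * rk - s).choose (fik - s) * ((rj * rk - s).choose (fjk - s))) := by
            apply sum_congr rfl; intro S hS
            rw [card_product, hcount1 S hS, hcount2 S hS]
        _ = rk.choose s *
            ((ri * rk - s).choose (fik - s) * ((rj * rk - s).choose (fjk - s))) := by
            rw [sum_const, card_powersetCard, hrk, smul_eq_mul]
    -- real estimates
    have hN1R : (0:ℝ) < ((ri * rk : ℕ) : ℝ) := by
      exact_mod_cast Nat.mul_pos hri1 hrk1
    have hN2R : (0:ℝ) < ((rj * rk : ℕ) : ℝ) := by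
      exact_mod_cast Nat.mul_pos hrj1 hrk1
    have hratio1 : (((ri * rk - s).choose (fik - s) : ℕ) : ℝ) ≤
        (((ri * rk).choose fik : ℕ) : ℝ) * ((fik : ℝ) / ((ri * rk : ℕ) : ℝ)) ^ s := by
      have h := aux_choose_pow s (ri * rk) fik hsfik hfik2
      rw [div_pow, mul_div_assoc', le_div_iff₀ (pow_pos hN1R s)]
      exact_mod_cast h
    have hratio2 : (((rj * rk - s).choose (fjk - s) : ℕ) : ℝ) ≤
        (((rj * rk).choose fjk : ℕ) : ℝ) * ((fjk : ℝ) / ((rj * rk : ℕ) : ℝ)) ^ s := by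
      have h := aux_choose_pow s (rj * rk) fjk hsfjk hfjk2
      rw [div_pow, mul_div_assoc', le_div_iff₀ (pow_pos hN2R s)]
      exact_mod_cast h
    have hchooserk : ((rk.choose s : ℕ) : ℝ) ≤ (rk : ℝ) ^ s / (s.factorial : ℝ) := by
      have := Nat.choose_le_pow_div (α := ℝ) s rk
      push_cast at this ⊢
      exact this
    -- the scalar bound
    have hM : (rk : ℝ) ^ s / (s.factorial : ℝ) * ((fik : ℝ) / ((ri * rk : ℕ) : ℝ)) ^ s *
        ((fjk : ℝ) / ((rj * rk : ℕ) : ℝ)) ^ s ≤ (2 : ℝ) ^ (-t) := by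
      have hMeq : (rk : ℝ) ^ s / (s.factorial : ℝ) * ((fik : ℝ) / ((ri * rk : ℕ) : ℝ)) ^ s *
          ((fjk : ℝ) / ((rj * rk : ℕ) : ℝ)) ^ s
          = ((fik : ℝ) * fjk / ((ri : ℝ) * rj * rk)) ^ s / (s.factorial : ℝ) := by
        have hsf : (0:ℝ) < (s.factorial : ℝ) := by exact_mod_cast s.factorial_pos
        push_cast
        rw [div_pow, div_pow, div_pow, mul_pow, mul_pow, mul_pow, mul_pow]
        field_simp
        ring
      rw [hMeq]
      have hm : (0:ℝ) < (fik : ℝ) * fjk / ((ri : ℝ) * rj * rk) := by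
        apply div_pos <;> positivity
      have hmt : (fik : ℝ) * fjk / ((ri : ℝ) * rj * rk) ≤ (s : ℝ) / 11 := by
        have : 11 * ((fik : ℝ) * fjk / ((ri : ℝ) * rj * rk)) = t := by
          rw [ht]; ring
        linarith
      have hfact : ((s : ℝ)) ^ s / (s.factorial : ℝ) ≤ Real.exp 1 ^ s := by
        rw [Real.exp_one_pow]
        exact Real.pow_div_factorial_le_exp (x := (s : ℝ)) (Nat.cast_nonneg s) s
      calc ((fik : ℝ) * fjk / ((ri : ℝ) * rj * rk)) ^ s / (s.factorial : ℝ)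
          ≤ ((s : ℝ) / 11) ^ s / (s.factorial : ℝ) := by
            gcongr
        _ = ((s : ℝ) ^ s / (s.factorial : ℝ)) * (1 / 11) ^ s := by
            ring
        _ ≤ Real.exp 1 ^ s * (1 / 11) ^ s := by
            gcongr
        _ = (Real.exp 1 / 11) ^ s := by ring
        _ ≤ ((1 : ℝ) / 2) ^ s := by
            have h1 : (0:ℝ) ≤ Real.exp 1 / 11 := by positivity
            have h2 : Real.exp 1 / 11 ≤ 1 / 2 := by nlinarith [Real.exp_one_lt_d9]
            exact pow_le_pow_left₀ h1 h2 s
        _ = (2 : ℝ) ^ (-(s : ℝ)) := by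
            rw [Real.rpow_neg (by norm_num : (0:ℝ) ≤ 2), Real.rpow_natCast, one_div, inv_pow]
        _ ≤ (2 : ℝ) ^ (-t) :=
            Real.rpow_le_rpow_of_exponent_le one_le_two (neg_le_neg hts.le)
    rw [div_le_iff₀ hPpos]
    have hPcast : (P.card : ℝ) = (((ri * rk).choose fik : ℕ) : ℝ) * (((rj * rk).choose fjk : ℕ) : ℝ) := by
      rw [hDcard]; push_cast; ring
    rw [hPcast]
    calc (Q.card : ℝ)
        ≤ ((rk.choose s : ℕ) : ℝ) * ((((ri * rk - s).choose (fik - s) : ℕ) : ℝ) *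
            (((rj * rk - s).choose (fjk - s) : ℕ) : ℝ)) := by exact_mod_cast hQB
      _ ≤ ((rk : ℝ) ^ s / (s.factorial : ℝ)) *
            (((((ri * rk).choose fik : ℕ) : ℝ) * ((fik : ℝ) / ((ri * rk : ℕ) : ℝ)) ^ s) *
             ((((rj * rk).choose fjk : ℕ) : ℝ) * ((fjk : ℝ) / ((rj * rk : ℕ) : ℝ)) ^ s)) := by
          apply mul_le_mul hchooserk
          · apply mul_le_mul hratio1 hratio2 (by positivity) (by positivity)
          · positivity
          · positivity
      _ = ((rk : ℝ) ^ s / (s.factorial : ℝ) * ((fik : ℝ) / ((ri * rk : ℕ) : ℝ)) ^ s *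
            ((fjk : ℝ) / ((rj * rk : ℕ) : ℝ)) ^ s) *
            ((((ri * rk).choose fik : ℕ) : ℝ) * (((rj * rk).choose fjk : ℕ) : ℝ)) := by ring
      _ ≤ (2 : ℝ) ^ (-t) * ((((ri * rk).choose fik : ℕ) : ℝ) * (((rj * rk).choose fjk : ℕ) : ℝ)) := by
          apply mul_le_mul_of_nonneg_right hM (by positivity)
  · -- Q is empty
    have hQe : Q = ∅ := by
      rw [eq_empty_iff_forall_notMem]
      intro FF hFF
      have hsA := hAcard FF hFF
      rw [hQ] at hFF
      simp only [mem_filter] at hFF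
      have hFFP := hFF.1
      rw [hP] at hFFP
      simp only [mem_product, mem_powersetCard] at hFFP
      set A := Vk.filter (fun w => (u, w) ∈ FF.1 ∧ (v, w) ∈ FF.2) with hA
      have hArk : A.card ≤ rk := hrk ▸ card_le_card (filter_subset _ _)
      have hAfik : A.card ≤ fik := by
        have himg : A.image (fun w => (u, w)) ⊆ FF.1 := by
          intro p hp
          obtain ⟨w, hw, rfl⟩ := mem_image.mp hp
          rw [hA] at hw
          simp only [mem_filter] at hw
          exact hw.2.1
        have hc : (A.image (fun w => (u, w))).card = A.card :=
          card_image_of_injective _ (fun a b h => (Prod.ext_iff.mp h).2)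
        calc A.card = (A.image (fun w => (u, w))).card := hc.symm
          _ ≤ FF.1.card := card_le_card himg
          _ = fik := hFFP.1.2
      have hAfjk : A.card ≤ fjk := by
        have himg : A.image (fun w => (v, w)) ⊆ FF.2 := by
          intro p hp
          obtain ⟨w, hw, rfl⟩ := mem_image.mp hp
          rw [hA] at hw
          simp only [mem_filter] at hw
          exact hw.2.2
        have hc : (A.image (fun w => (v, w))).card = A.card :=
          card_image_of_injective _ (fun a b h => (Prod.ext_iff.mp h).2)
        calc A.card = (A.image (fun w => (v, w))).card := hc.symm
          _ ≤ FF.2.card := card_le_card himg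
          _ = fjk := hFFP.2.2
      push_neg at hbig
      omega
    rw [hQe, card_empty]
    simp only [Nat.cast_zero, zero_div]
    positivity
end
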